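/- arXiv:1311.7050 — 4 statements merged into one kernel-verified Lean document; each statement's English description precedes it below -/
import Mathlib

section
/- (Lemma 4.2, monotonicity of Λ along entire solutions.) Let U be a bounded nonnegative entire solution of the symmetric parabolic problem U_t = Δ U + g(t, x, U, ∇U) in Ω × ℝ, U = 0 on ∂Ω × ℝ, with g independent of x_1, even in p_1, and Lipschitz in (u, p). Then the function t ↦ Λ(U(·, t)) is nonincreasing on ℝ. -/
open Set Filter MeasureTheory Real
open Topology

noncomputable section

/-- Reflection `P_λ` about the hyperplane `x 0 = lam`. -/
def reflHyp (N : ℕ) [NeZero N] (lam : ℝ) (x : Fin N → ℝ) : Fin N → ℝ :=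
  Function.update x 0 (2 * lam - x 0)

/-- The cap `Ω_λ = {x ∈ Ω : x 0 > λ}`. -/
def capSet {N : ℕ} [NeZero N] (Ω : Set (Fin N → ℝ)) (lam : ℝ) : Set (Fin N → ℝ) :=
  {x ∈ Ω | lam < x 0}

/-- `ℓ = sup {λ : Ω ∩ H_λ ≠ ∅}`, i.e. the supremum of the first coordinate on `Ω`. -/
def ellOf {N : ℕ} [NeZero N] (Ω : Set (Fin N → ℝ)) : ℝ :=
  sSup ((fun x => x 0) '' Ω)

/-- The moving-plane functional
`Λ(z) = inf {λ ∈ (0, ℓ] : V_μ z ≥ 0 on Ω_μ for all μ > λ}`. -/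
def bigLambda {N : ℕ} [NeZero N] (Ω : Set (Fin N → ℝ)) (z : (Fin N → ℝ) → ℝ) : ℝ :=
  sInf {lam | lam ∈ Ioc 0 (ellOf Ω) ∧
    ∀ μ : ℝ, lam < μ → ∀ x ∈ capSet Ω μ, 0 ≤ z (reflHyp N μ x) - z x}

/-- Partial derivative in the `i`-th coordinate direction. -/
def pd {N : ℕ} (i : Fin N) (f : (Fin N → ℝ) → ℝ) (x : Fin N → ℝ) : ℝ :=
  fderiv ℝ f x (Pi.single i 1)

/-- The Laplacian, as the sum of second partial derivatives. -/
def lapl {N : ℕ} (f : (Fin N → ℝ) → ℝ) (x : Fin N → ℝ) : ℝ :=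
  ∑ i, pd i (pd i f) x

namespace MP

variable {N : ℕ} [NeZero N]

/-- linear part of the reflection -/
def reflCLM (N : ℕ) [NeZero N] : (Fin N → ℝ) →L[ℝ] (Fin N → ℝ) :=
  ContinuousLinearMap.id ℝ _ -
    (ContinuousLinearMap.proj 0).smulRight (2 • Pi.single (0 : Fin N) (1 : ℝ))

lemma reflCLM_apply_zero (x : Fin N → ℝ) : reflCLM N x 0 = -(x 0) := by
  simp [reflCLM]; ring

lemma reflCLM_apply_ne (x : Fin N → ℝ) {j : Fin N} (h : j ≠ 0) : reflCLM N x j = x j := by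
  simp [reflCLM, Pi.single_apply, h]

lemma reflHyp_apply_zero (lam : ℝ) (x : Fin N → ℝ) : reflHyp N lam x 0 = 2 * lam - x 0 := by
  simp [reflHyp]

lemma reflHyp_apply_ne (lam : ℝ) (x : Fin N → ℝ) {j : Fin N} (h : j ≠ 0) :
    reflHyp N lam x j = x j := by
  simp [reflHyp, Function.update_apply, h]

lemma reflHyp_eq (lam : ℝ) (x : Fin N → ℝ) :
    reflHyp N lam x = reflCLM N x + (2 * lam) • (Pi.single (0 : Fin N) (1 : ℝ) : Fin N → ℝ) := by
  funext j
  rcases eq_or_ne j 0 with rfl | h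
  · simp [reflHyp_apply_zero, reflCLM_apply_zero]; ring
  · simp [reflHyp_apply_ne _ _ h, reflCLM_apply_ne _ h, Pi.single_apply, h]

lemma hasFDerivAt_reflHyp (lam : ℝ) (x : Fin N → ℝ) :
    HasFDerivAt (reflHyp N lam) (reflCLM N) x := by
  have : reflHyp N lam = fun y => reflCLM N y + (2 * lam) • (Pi.single (0 : Fin N) (1 : ℝ) : Fin N → ℝ) := by
    funext y; exact reflHyp_eq lam y
  rw [this]
  exact ((reflCLM N).hasFDerivAt).add_const _

lemma contDiff_reflHyp (lam : ℝ) : ContDiff ℝ 2 (reflHyp N lam) := by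
  have : reflHyp N lam = fun y => reflCLM N y + (2 * lam) • (Pi.single (0 : Fin N) (1 : ℝ) : Fin N → ℝ) := by
    funext y; exact reflHyp_eq lam y
  rw [this]
  exact ((reflCLM N).contDiff).add contDiff_const

lemma continuous_reflHyp (lam : ℝ) : Continuous (reflHyp N lam) :=
  (contDiff_reflHyp (N := N) lam).continuous

lemma reflCLM_single_zero : reflCLM N (Pi.single (0 : Fin N) (1 : ℝ)) = -(Pi.single 0 1) := by
  funext j
  rcases eq_or_ne j 0 with rfl | h
  · simp [reflCLM_apply_zero]
  · simp [reflCLM_apply_ne _ h, Pi.single_apply, h]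

lemma reflCLM_single_ne {i : Fin N} (h : i ≠ 0) :
    reflCLM N (Pi.single i (1 : ℝ)) = Pi.single i 1 := by
  funext j
  rcases eq_or_ne j 0 with rfl | hj
  · simp [reflCLM_apply_zero, Pi.single_apply, h]
  · simp [reflCLM_apply_ne _ hj]

lemma reflHyp_involutive (lam : ℝ) (x : Fin N → ℝ) : reflHyp N lam (reflHyp N lam x) = x := by
  funext j
  rcases eq_or_ne j 0 with rfl | h
  · rw [reflHyp_apply_zero, reflHyp_apply_zero]; ring
  · rw [reflHyp_apply_ne _ _ h, reflHyp_apply_ne _ _ h]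

lemma reflHyp_eq_self {lam : ℝ} {x : Fin N → ℝ} (h : x 0 = lam) : reflHyp N lam x = x := by
  funext j
  rcases eq_or_ne j 0 with rfl | hj
  · rw [reflHyp_apply_zero, h]; ring
  · exact reflHyp_apply_ne _ _ hj

section PD

variable {N : ℕ} [NeZero N]

lemma pd_congr_nhds {f g : (Fin N → ℝ) → ℝ} {x : Fin N → ℝ} (h : f =ᶠ[𝓝 x] g) (i : Fin N) :
    pd i f x = pd i g x := by
  unfold pd; rw [h.fderiv_eq]

lemma pd_sub {f g : (Fin N → ℝ) → ℝ} {x : Fin N → ℝ} (hf : DifferentiableAt ℝ f x)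
    (hg : DifferentiableAt ℝ g x) (i : Fin N) :
    pd i (fun y => f y - g y) x = pd i f x - pd i g x := by
  unfold pd; rw [fderiv_fun_sub hf hg]; rfl

lemma pd_const_mul {f : (Fin N → ℝ) → ℝ} {x : Fin N → ℝ} (c : ℝ)
    (hf : DifferentiableAt ℝ f x) (i : Fin N) :
    pd i (fun y => c * f y) x = c * pd i f x := by
  unfold pd; rw [fderiv_const_mul hf]; rfl

lemma pd_comp_refl {f : (Fin N → ℝ) → ℝ} {lam : ℝ} {x : Fin N → ℝ}
    (hf : DifferentiableAt ℝ f (reflHyp N lam x)) (i : Fin N) :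
    pd i (fun y => f (reflHyp N lam y)) x
      = fderiv ℝ f (reflHyp N lam x) (reflCLM N (Pi.single i 1)) := by
  have h := (hf.hasFDerivAt.comp x (hasFDerivAt_reflHyp lam x)).fderiv
  unfold pd
  rw [show (fun y => f (reflHyp N lam y)) = f ∘ reflHyp N lam from rfl, h]
  rfl

lemma pd_comp_refl_zero {f : (Fin N → ℝ) → ℝ} {lam : ℝ} {x : Fin N → ℝ}
    (hf : DifferentiableAt ℝ f (reflHyp N lam x)) :
    pd 0 (fun y => f (reflHyp N lam y)) x = -(pd 0 f (reflHyp N lam x)) := by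
  rw [pd_comp_refl hf, reflCLM_single_zero, map_neg]; rfl

lemma pd_comp_refl_ne {f : (Fin N → ℝ) → ℝ} {lam : ℝ} {x : Fin N → ℝ}
    (hf : DifferentiableAt ℝ f (reflHyp N lam x)) {i : Fin N} (hi : i ≠ 0) :
    pd i (fun y => f (reflHyp N lam y)) x = pd i f (reflHyp N lam x) := by
  rw [pd_comp_refl hf, reflCLM_single_ne hi]; rfl

lemma pd_differentiableAt {f : (Fin N → ℝ) → ℝ} {x : Fin N → ℝ}
    (hf : ContDiffAt ℝ 2 f x) (i : Fin N) : DifferentiableAt ℝ (pd i f) x := by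
  have hF : DifferentiableAt ℝ (fderiv ℝ f) x :=
    (hf.fderiv_right (by norm_num : (1 : WithTop ℕ∞) + 1 ≤ 2)).differentiableAt one_ne_zero
  exact ((ContinuousLinearMap.apply ℝ ℝ ((Pi.single i 1 : Fin N → ℝ))).differentiableAt).comp x hF

end PD

section Test

/-- Derivative at a left-accessible minimum point is nonpositive. -/
lemma deriv_nonpos_of_min {φ : ℝ → ℝ} {s t₀ d : ℝ} (h : HasDerivAt φ d t₀) (hs : s < t₀)
    (hmin : ∀ r ∈ Ico s t₀, φ t₀ ≤ φ r) : d ≤ 0 := by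
  have hsl : Tendsto (slope φ t₀) (𝓝[<] t₀) (𝓝 d) :=
    (hasDerivAt_iff_tendsto_slope.1 h).mono_left
      (nhdsWithin_mono _ (fun r hr => ne_of_lt hr))
  refine le_of_tendsto hsl ?_
  filter_upwards [Ico_mem_nhdsLT hs] with r hr
  have hnum : 0 ≤ φ r - φ t₀ := sub_nonneg.2 (hmin r ⟨hr.1, hr.2⟩)
  have hden : r - t₀ < 0 := sub_neg.2 hr.2
  rw [slope_def_field]
  rw [div_nonpos_iff]
  left
  exact ⟨by linarith, hden.le⟩

variable {N : ℕ} [NeZero N]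

/-- Second derivative test: at an interior local minimum of a `C²` function each pure second
partial derivative is nonnegative. -/
lemma second_deriv_test {f : (Fin N → ℝ) → ℝ} {x : Fin N → ℝ}
    (hf : ContDiffAt ℝ 2 f x) (hmin : IsLocalMin f x) (i : Fin N) :
    0 ≤ pd i (pd i f) x := by
  by_contra hneg
  push_neg at hneg
  set c := pd i (pd i f) x with hc
  set v : Fin N → ℝ := Pi.single i 1 with hv
  set L : ℝ → Fin N → ℝ := fun r => x + r • v with hL
  have hL0 : L 0 = x := by simp [hL]
  have hLd : ∀ r : ℝ, HasDerivAt L v r := by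
    intro r
    simpa [hL] using (((hasDerivAt_id r).smul_const v).const_add x)
  have hLcont : Continuous L := by fun_prop
  -- f is C² on a neighborhood
  obtain ⟨u, hu_nhds, hu⟩ := hf.contDiffOn (m := 2) le_rfl (by norm_num)
  obtain ⟨u', hu'sub, hu'o, hxu'⟩ := mem_nhds_iff.1 hu_nhds
  have hu' : ContDiffOn ℝ 2 f u' := hu.mono hu'sub
  have hdiff : ∀ y ∈ u', DifferentiableAt ℝ f y := fun y hy =>
    ((hu'.differentiableOn (by norm_num)) y hy).differentiableAt (hu'o.mem_nhds hy)
  -- ψ r := pd i f (L r)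
  set ψ : ℝ → ℝ := fun r => pd i f (L r) with hψ
  have hψd : HasDerivAt ψ c 0 := by
    have h1 : DifferentiableAt ℝ (pd i f) x := pd_differentiableAt hf i
    rw [← hL0] at h1
    have := (h1.hasFDerivAt.comp_hasDerivAt 0 (hLd 0))
    rw [hL0] at this
    exact this
  have hψ0 : ψ 0 = 0 := by
    have := hmin.fderiv_eq_zero
    simp [hψ, hL0, pd, this]
  -- slope of ψ tends to c < 0, so ψ r < 0 for small r > 0
  have hslope : Tendsto (fun r => ψ r / r) (𝓝[≠] (0:ℝ)) (𝓝 c) := by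
    have := hasDerivAt_iff_tendsto_slope.1 hψd
    refine this.congr' ?_
    filter_upwards [self_mem_nhdsWithin] with r hr
    rw [slope_def_field, hψ0]
    simp
  have hev : ∀ᶠ r in 𝓝[≠] (0:ℝ), ψ r / r < c / 2 :=
    hslope.eventually (eventually_lt_nhds (by linarith : c < c / 2))
  have hev' : ∀ᶠ r in 𝓝 (0:ℝ), r ≠ 0 → ψ r / r < c / 2 := by
    simpa [eventually_nhdsWithin_iff] using hev
  obtain ⟨δ₁, hδ₁, hδ₁p⟩ := Metric.eventually_nhds_iff.1 hev'
  -- local min neighborhood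
  obtain ⟨δ₂, hδ₂, hδ₂p⟩ := Metric.eventually_nhds_iff.1 hmin
  -- L ⁻¹ u' is open around 0
  have hpre : IsOpen (L ⁻¹' u') := hu'o.preimage hLcont
  have h0pre : (0:ℝ) ∈ L ⁻¹' u' := by simp [hL0, hxu']
  obtain ⟨δ₃, hδ₃, hδ₃p⟩ := Metric.isOpen_iff.1 hpre 0 h0pre
  -- continuity of L at small r : dist (L r) x small
  have hLdist : ∀ r : ℝ, dist (L r) x ≤ |r| := by
    intro r
    have : L r - x = r • v := by simp [hL]
    rw [dist_eq_norm, this]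
    have : ‖r • v‖ = |r| * ‖v‖ := by rw [norm_smul]; simp
    rw [this, hv, Pi.norm_single]
    simp
  set r₀ : ℝ := min (min (δ₁ / 2) (δ₂ / 2)) (δ₃ / 2) with hr₀
  have hr₀pos : 0 < r₀ := by positivity
  have hr₀1 : r₀ < δ₁ := by
    have : r₀ ≤ δ₁ / 2 := le_trans (min_le_left _ _) (min_le_left _ _)
    linarith
  have hr₀2 : r₀ < δ₂ := by
    have : r₀ ≤ δ₂ / 2 := le_trans (min_le_left _ _) (min_le_right _ _)
    linarith
  have hr₀3 : r₀ < δ₃ := by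
    have : r₀ ≤ δ₃ / 2 := min_le_right _ _
    linarith
  -- φ = f ∘ L is strictly decreasing on [0, r₀]
  have hmem : ∀ r ∈ Icc (0:ℝ) r₀, L r ∈ u' := by
    intro r hr
    apply hδ₃p
    rw [Metric.mem_ball, Real.dist_eq]
    have : |r| ≤ r₀ := by rw [abs_of_nonneg hr.1]; exact hr.2
    simpa using lt_of_le_of_lt this hr₀3
  have hφd : ∀ r ∈ Icc (0:ℝ) r₀, HasDerivAt (fun r => f (L r)) (ψ r) r := by
    intro r hr
    have := ((hdiff _ (hmem r hr)).hasFDerivAt.comp_hasDerivAt r (hLd r))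
    exact this
  have hanti : StrictAntiOn (fun r => f (L r)) (Icc (0:ℝ) r₀) := by
    apply strictAntiOn_of_deriv_neg (convex_Icc _ _)
    · exact hu'.continuousOn.comp hLcont.continuousOn hmem
    · intro r hr
      rw [interior_Icc] at hr
      have hder := (hφd r ⟨hr.1.le, hr.2.le⟩).deriv
      rw [hder]
      have hne : r ≠ 0 := ne_of_gt hr.1
      have habs : |r - 0| < δ₁ := by
        rw [sub_zero, abs_of_pos hr.1]; exact lt_trans hr.2 hr₀1
      have := hδ₁p (by rwa [Real.dist_eq] : dist r 0 < δ₁) hne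
      -- ψ r / r < c/2 < 0 and r > 0 so ψ r < 0
      have : ψ r < 0 := by
        by_contra hge
        push_neg at hge
        have : 0 ≤ ψ r / r := div_nonneg hge hr.1.le
        linarith
      exact this
  have hlt : f (L r₀) < f (L 0) :=
    hanti (left_mem_Icc.2 hr₀pos.le) (right_mem_Icc.2 hr₀pos.le) hr₀pos
  have hge : f (L 0) ≤ f (L r₀) := by
    rw [hL0]
    apply hδ₂p
    calc dist (L r₀) x ≤ |r₀| := hLdist r₀
    _ < δ₂ := by rw [abs_of_pos hr₀pos]; exact hr₀2
  linarith

end Test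

section Geom

variable {N : ℕ} [NeZero N] {Ω : Set (Fin N → ℝ)}

lemma update_mem (hΩsym : reflHyp N 0 '' Ω = Ω)
    (hΩconv : ∀ x ∈ Ω, ∀ y ∈ Ω, (∀ i : Fin N, i ≠ 0 → x i = y i) → segment ℝ x y ⊆ Ω)
    {u : Fin N → ℝ} (hu : u ∈ Ω) (hu0 : 0 < u 0) {c : ℝ}
    (hc1 : -(u 0) ≤ c) (hc2 : c ≤ u 0) : Function.update u 0 c ∈ Ω := by
  have hubar : reflHyp N 0 u ∈ Ω := by
    rw [← hΩsym]; exact mem_image_of_mem _ hu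
  have hagree : ∀ i : Fin N, i ≠ 0 → reflHyp N 0 u i = u i := fun i hi => reflHyp_apply_ne _ _ hi
  have hseg := hΩconv _ hubar u hu hagree
  set a : ℝ := (u 0 - c) / (2 * u 0) with ha
  set b : ℝ := (u 0 + c) / (2 * u 0) with hb
  have hap : 0 ≤ a := by apply div_nonneg <;> linarith
  have hbp : 0 ≤ b := by apply div_nonneg <;> linarith
  have h00 : (u 0) ≠ 0 := ne_of_gt hu0
  have hab : a + b = 1 := by rw [ha, hb]; field_simp; ring
  have heq : a • reflHyp N 0 u + b • u = Function.update u 0 c := by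
    funext j
    rcases eq_or_ne j 0 with rfl | hj
    · have hR : reflHyp N 0 u 0 = -(u 0) := by rw [reflHyp_apply_zero]; ring
      have h0 : (u 0) ≠ 0 := ne_of_gt hu0
      rw [Pi.add_apply, Pi.smul_apply, Pi.smul_apply, smul_eq_mul, smul_eq_mul,
        Function.update_self, hR, ha, hb]
      field_simp
      ring
    · simp only [Pi.add_apply, Pi.smul_apply, smul_eq_mul, hagree j hj,
        Function.update_of_ne hj]
      rw [← add_mul, hab, one_mul]
  exact hseg ⟨a, b, hap, hbp, hab, heq⟩

lemma refl_mem (hΩsym : reflHyp N 0 '' Ω = Ω)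
    (hΩconv : ∀ x ∈ Ω, ∀ y ∈ Ω, (∀ i : Fin N, i ≠ 0 → x i = y i) → segment ℝ x y ⊆ Ω)
    {μ : ℝ} {x : Fin N → ℝ} (hμ : 0 < μ) (hx : x ∈ Ω) (hxm : μ ≤ x 0) :
    reflHyp N μ x ∈ Ω := by
  have hx0 : 0 < x 0 := lt_of_lt_of_le hμ hxm
  exact update_mem hΩsym hΩconv hx hx0 (by linarith) (by linarith)

lemma refl_mem_closure (hΩsym : reflHyp N 0 '' Ω = Ω)
    (hΩconv : ∀ x ∈ Ω, ∀ y ∈ Ω, (∀ i : Fin N, i ≠ 0 → x i = y i) → segment ℝ x y ⊆ Ω)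
    {μ : ℝ} {x : Fin N → ℝ} (hμ : 0 < μ) (hx : x ∈ closure Ω) (hxm : μ ≤ x 0) :
    reflHyp N μ x ∈ closure Ω := by
  obtain ⟨u, hu, hulim⟩ := mem_closure_iff_seq_limit.1 hx
  set cf : (Fin N → ℝ) → ℝ := fun y => max (-(y 0)) (min (y 0) (2 * μ - y 0)) with hcf
  have hcfc : Continuous cf := by fun_prop
  set v : ℕ → Fin N → ℝ := fun n => Function.update (u n) 0 (cf (u n)) with hv
  have hu0 : Tendsto (fun n => u n 0) atTop (𝓝 (x 0)) :=
    ((continuous_apply (0 : Fin N)).tendsto x).comp hulim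
  have hx0 : 0 < x 0 := lt_of_lt_of_le hμ hxm
  have hev : ∀ᶠ n in atTop, v n ∈ Ω := by
    filter_upwards [hu0.eventually (eventually_gt_nhds hx0)] with n hn
    refine update_mem hΩsym hΩconv (hu n) hn (le_max_left _ _) ?_
    exact max_le (by linarith) (min_le_left _ _)
  have hvlim : Tendsto v atTop (𝓝 (reflHyp N μ x)) := by
    rw [tendsto_pi_nhds]
    intro j
    rcases eq_or_ne j 0 with rfl | hj
    · have h1 : Tendsto (fun n => cf (u n)) atTop (𝓝 (cf x)) := (hcfc.tendsto x).comp hulim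
      have h2 : cf x = 2 * μ - x 0 := by
        rw [hcf]
        simp only
        rw [min_eq_right (by linarith), max_eq_right (by linarith)]
      have h3 : ∀ n, v n 0 = cf (u n) := fun n => Function.update_self _ _ _
      rw [reflHyp_apply_zero]
      simpa [h3, h2] using h1
    · have h3 : ∀ n, v n j = u n j := fun n => Function.update_of_ne hj _ _
      rw [reflHyp_apply_ne _ _ hj]
      simpa [h3, Function.comp_def] using ((continuous_apply j).tendsto x).comp hulim
  exact mem_closure_of_tendsto hvlim hev

end Geom

section Lap

variable {N : ℕ} [NeZero N]

lemma lapl_sub_refl {F : (Fin N → ℝ) → ℝ} {μ : ℝ} {x : Fin N → ℝ}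
    (hx : ContDiffAt ℝ 2 F x) (hPx : ContDiffAt ℝ 2 F (reflHyp N μ x)) :
    lapl (fun y => F (reflHyp N μ y) - F y) x
      = lapl F (reflHyp N μ x) - lapl F x := by
  set P := reflHyp N μ with hP
  have hevx : ∀ᶠ y in 𝓝 x, ContDiffAt ℝ 2 F y := hx.eventually (by norm_num)
  have hevP : ∀ᶠ y in 𝓝 x, ContDiffAt ℝ 2 F (P y) :=
    ((continuous_reflHyp (N := N) μ).tendsto x).eventually (hPx.eventually (by norm_num))
  have key : ∀ i : Fin N,
      pd i (pd i (fun y => F (P y) - F y)) x = pd i (pd i F) (P x) - pd i (pd i F) x := by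
    intro i
    have hdPx2 : DifferentiableAt ℝ (pd i F) (P x) := pd_differentiableAt hPx i
    have hdx2 : DifferentiableAt ℝ (pd i F) x := pd_differentiableAt hx i
    have hdcomp2 : DifferentiableAt ℝ (fun y => pd i F (P y)) x :=
      hdPx2.comp x (hasFDerivAt_reflHyp μ x).differentiableAt
    rcases eq_or_ne i 0 with rfl | hi
    · have hev : (fun y => pd 0 (fun z => F (P z) - F z) y)
          =ᶠ[𝓝 x] (fun y => (-1) * pd 0 F (P y) - pd 0 F y) := by
        filter_upwards [hevx, hevP] with y h1 h2
        have hd1 : DifferentiableAt ℝ F y := h1.differentiableAt two_ne_zero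
        have hd2 : DifferentiableAt ℝ F (P y) := h2.differentiableAt two_ne_zero
        have hd3 : DifferentiableAt ℝ (fun z => F (P z)) y :=
          hd2.comp y (hasFDerivAt_reflHyp μ y).differentiableAt
        rw [pd_sub hd3 hd1, pd_comp_refl_zero hd2]
        ring
      rw [pd_congr_nhds hev,
        pd_sub ((hdcomp2.const_mul (-1))) hdx2,
        pd_const_mul _ hdcomp2, pd_comp_refl_zero hdPx2]
      ring
    · have hev : (fun y => pd i (fun z => F (P z) - F z) y)
          =ᶠ[𝓝 x] (fun y => pd i F (P y) - pd i F y) := by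
        filter_upwards [hevx, hevP] with y h1 h2
        have hd1 : DifferentiableAt ℝ F y := h1.differentiableAt two_ne_zero
        have hd2 : DifferentiableAt ℝ F (P y) := h2.differentiableAt two_ne_zero
        have hd3 : DifferentiableAt ℝ (fun z => F (P z)) y :=
          hd2.comp y (hasFDerivAt_reflHyp μ y).differentiableAt
        rw [pd_sub hd3 hd1, pd_comp_refl_ne hd2 hi]
      rw [pd_congr_nhds hev, pd_sub hdcomp2 hdx2, pd_comp_refl_ne hdPx2 hi]
  unfold lapl
  rw [← Finset.sum_sub_distrib]
  exact Finset.sum_congr rfl fun i _ => key i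

end Lap

section Key

variable {N : ℕ} [NeZero N]

set_option maxHeartbeats 1000000 in
lemma key_max_principle (Ω : Set (Fin N → ℝ))
    (hΩbd : Bornology.IsBounded Ω) (hΩopen : IsOpen Ω)
    (hΩsym : reflHyp N 0 '' Ω = Ω)
    (hΩconv : ∀ x ∈ Ω, ∀ y ∈ Ω, (∀ i : Fin N, i ≠ 0 → x i = y i) → segment ℝ x y ⊆ Ω)
    (β0 : ℝ) (hβ0 : 0 < β0)
    (g : ℝ → (Fin N → ℝ) → ℝ → (Fin N → ℝ) → ℝ)
    (hgsym : ∀ t x y u p, (∀ i : Fin N, i ≠ 0 → x i = y i) → g t x u p = g t y u p)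
    (hgeven : ∀ t x u (p : Fin N → ℝ), g t x u (Function.update p 0 (-(p 0))) = g t x u p)
    (hglip : ∀ t x u u' p p', |g t x u p - g t x u' p'| ≤ β0 * (|u - u'| + ‖p - p'‖))
    (U : (Fin N → ℝ) → ℝ → ℝ)
    (hUpos : ∀ x ∈ closure Ω, ∀ t : ℝ, 0 ≤ U x t)
    (hUcont : ContinuousOn (fun q : (Fin N → ℝ) × ℝ => U q.1 q.2) (closure Ω ×ˢ univ))
    (hUbc : ∀ x ∈ frontier Ω, ∀ t : ℝ, U x t = 0)
    (hUregt : ∀ x ∈ Ω, ∀ t : ℝ, DifferentiableAt ℝ (fun s => U x s) t)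
    (hUregx : ∀ t : ℝ, ∀ x ∈ Ω, ContDiffAt ℝ 2 (fun y => U y t) x)
    (hUpde : ∀ x ∈ Ω, ∀ t : ℝ,
      deriv (fun s => U x s) t
        = lapl (fun y => U y t) x + g t x (U x t) (fun i => pd i (fun y => U y t) x))
    (μ : ℝ) (hμ : 0 < μ) (s t : ℝ) (hst : s ≤ t)
    (hs : ∀ x ∈ capSet Ω μ, 0 ≤ U (reflHyp N μ x) s - U x s) :
    ∀ x ∈ capSet Ω μ, 0 ≤ U (reflHyp N μ x) t - U x t := by
  by_contra hcon
  push_neg at hcon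
  obtain ⟨x₁, hx₁mem, hx₁⟩ := hcon
  set P : (Fin N → ℝ) → Fin N → ℝ := reflHyp N μ with hPdef
  set w : (Fin N → ℝ) → ℝ → ℝ := fun x r => U (P x) r - U x r with hwdef
  set γ : ℝ := 2 * β0 with hγ
  set v : (Fin N → ℝ) → ℝ → ℝ := fun x r => Real.exp (-γ * (r - s)) * w x r with hvdef
  set K : Set (Fin N → ℝ) := closure (capSet Ω μ) with hKdef
  have hcapΩ : capSet Ω μ ⊆ Ω := fun y hy => hy.1
  have hKΩ : K ⊆ closure Ω := closure_mono hcapΩ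
  have hKge : ∀ x ∈ K, μ ≤ x 0 := by
    intro x hx
    have h1 : capSet Ω μ ⊆ {y : Fin N → ℝ | μ ≤ y 0} := fun y hy => le_of_lt hy.2
    have h2 : IsClosed {y : Fin N → ℝ | μ ≤ y 0} :=
      isClosed_le continuous_const (continuous_apply 0)
    exact closure_minimal h1 h2 hx
  have hPK : ∀ x ∈ K, P x ∈ closure Ω := fun x hx =>
    refl_mem_closure hΩsym hΩconv hμ (hKΩ hx) (hKge x hx)
  have hKcomp : IsCompact K := (hΩbd.subset hcapΩ).isCompact_closure
  set C : Set ((Fin N → ℝ) × ℝ) := K ×ˢ Icc s t with hCdef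
  have hCcomp : IsCompact C := hKcomp.prod isCompact_Icc
  have hCsub : C ⊆ closure Ω ×ˢ (univ : Set ℝ) := fun p hp => ⟨hKΩ hp.1, mem_univ _⟩
  have hx₁K : x₁ ∈ K := subset_closure hx₁mem
  have hCne : (x₁, t) ∈ C := ⟨hx₁K, ⟨hst, le_rfl⟩⟩
  have hvcont : ContinuousOn (fun p : (Fin N → ℝ) × ℝ => v p.1 p.2) C := by
    have hmap : Continuous (fun p : (Fin N → ℝ) × ℝ => (P p.1, p.2)) :=
      ((continuous_reflHyp (N := N) μ).comp continuous_fst).prodMk continuous_snd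
    have hU1 : ContinuousOn (fun p : (Fin N → ℝ) × ℝ => U (P p.1) p.2) C :=
      hUcont.comp hmap.continuousOn (fun p hp => ⟨hPK _ hp.1, mem_univ _⟩)
    have hU2 : ContinuousOn (fun p : (Fin N → ℝ) × ℝ => U p.1 p.2) C := hUcont.mono hCsub
    have hexp : Continuous (fun p : (Fin N → ℝ) × ℝ => Real.exp (-γ * (p.2 - s))) := by
      fun_prop
    exact hexp.continuousOn.mul (hU1.sub hU2)
  obtain ⟨p₀, hp₀C, hp₀min⟩ :=
    hCcomp.exists_isMinOn ⟨_, hCne⟩ hvcont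
  set x₀ : Fin N → ℝ := p₀.1 with hx₀def
  set t₀ : ℝ := p₀.2 with ht₀def
  have hmin : ∀ q ∈ C, v x₀ t₀ ≤ v q.1 q.2 := fun q hq => hp₀min hq
  have hx₀K : x₀ ∈ K := hp₀C.1
  have ht₀mem : t₀ ∈ Icc s t := hp₀C.2
  have hvneg : v x₀ t₀ < 0 := by
    have h1 := hmin (x₁, t) hCne
    have h2 : v x₁ t < 0 :=
      mul_neg_of_pos_of_neg (Real.exp_pos _) hx₁
    exact lt_of_le_of_lt h1 h2
  have hwneg : w x₀ t₀ < 0 := by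
    by_contra hge
    push_neg at hge
    have : 0 ≤ v x₀ t₀ := mul_nonneg (Real.exp_pos _).le hge
    linarith
  have hx₀ge : μ ≤ x₀ 0 := hKge x₀ hx₀K
  have hx₀ne : x₀ 0 ≠ μ := by
    intro h
    have : P x₀ = x₀ := reflHyp_eq_self h
    have : w x₀ t₀ = 0 := by simp [hwdef, this]
    linarith
  have hx₀gt : μ < x₀ 0 := lt_of_le_of_ne hx₀ge (Ne.symm hx₀ne)
  have hx₀Ω : x₀ ∈ Ω := by
    by_contra hno
    have hfr : x₀ ∈ frontier Ω := by
      rw [hΩopen.frontier_eq]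
      exact ⟨hKΩ hx₀K, hno⟩
    have h1 : U x₀ t₀ = 0 := hUbc x₀ hfr t₀
    have h2 : 0 ≤ U (P x₀) t₀ := hUpos _ (hPK x₀ hx₀K) t₀
    have : 0 ≤ w x₀ t₀ := by simp [hwdef, h1]; linarith
    linarith
  have hx₀cap : x₀ ∈ capSet Ω μ := ⟨hx₀Ω, hx₀gt⟩
  have hPx₀Ω : P x₀ ∈ Ω := refl_mem hΩsym hΩconv hμ hx₀Ω hx₀ge
  have hst₀ : s < t₀ := by
    rcases lt_or_eq_of_le ht₀mem.1 with h | h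
    · exact h
    · exfalso
      have := hs x₀ hx₀cap
      have : 0 ≤ w x₀ t₀ := by rw [h] at this; exact this
      linarith
  -- spatial local minimum
  have hcapopen : IsOpen (capSet Ω μ) := by
    have : capSet Ω μ = Ω ∩ {y : Fin N → ℝ | μ < y 0} := rfl
    rw [this]
    exact hΩopen.inter (isOpen_lt continuous_const (continuous_apply 0))
  have hlocmin : IsLocalMin (fun y => w y t₀) x₀ := by
    filter_upwards [hcapopen.mem_nhds hx₀cap] with y hy
    have h1 := hmin (y, t₀) ⟨subset_closure hy, ht₀mem⟩
    have hE : (0:ℝ) < Real.exp (-γ * (t₀ - s)) := Real.exp_pos _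
    have : Real.exp (-γ * (t₀ - s)) * w x₀ t₀ ≤ Real.exp (-γ * (t₀ - s)) * w y t₀ := h1
    exact (mul_le_mul_iff_right₀ hE).1 this
  set F : (Fin N → ℝ) → ℝ := fun y => U y t₀ with hFdef
  have hFx : ContDiffAt ℝ 2 F x₀ := hUregx t₀ x₀ hx₀Ω
  have hFPx : ContDiffAt ℝ 2 F (P x₀) := hUregx t₀ _ hPx₀Ω
  have hwslice : (fun y => w y t₀) = fun y => F (P y) - F y := rfl
  have hwC2 : ContDiffAt ℝ 2 (fun y => w y t₀) x₀ := by
    rw [hwslice]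
    exact (hFPx.comp x₀ ((contDiff_reflHyp (N := N) μ).contDiffAt)).sub hFx
  have hlap0 : 0 ≤ lapl (fun y => w y t₀) x₀ := by
    unfold lapl
    exact Finset.sum_nonneg fun i _ => second_deriv_test hwC2 hlocmin i
  have hlapeq : lapl (fun y => w y t₀) x₀ = lapl F (P x₀) - lapl F x₀ := by
    rw [hwslice]; exact lapl_sub_refl hFx hFPx
  -- gradient vanishes
  have hgrad : fderiv ℝ (fun y => w y t₀) x₀ = 0 := hlocmin.fderiv_eq_zero
  have hpdzero : ∀ i : Fin N, pd i (fun y => w y t₀) x₀ = 0 := by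
    intro i; rw [pd, hgrad]; rfl
  have hdiffF : DifferentiableAt ℝ F x₀ := hFx.differentiableAt two_ne_zero
  have hdiffFP0 : DifferentiableAt ℝ F (P x₀) := hFPx.differentiableAt two_ne_zero
  have hdiffFP : DifferentiableAt ℝ (fun y => F (P y)) x₀ :=
    hdiffFP0.comp x₀ (hasFDerivAt_reflHyp μ x₀).differentiableAt
  set q : Fin N → ℝ := fun i => pd i F (P x₀) with hqdef
  have hsplit : ∀ i : Fin N, pd i (fun y => F (P y)) x₀ = pd i F x₀ := by
    intro i
    have h0 := hpdzero i
    rw [hwslice] at h0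
    rw [pd_sub hdiffFP hdiffF i] at h0
    linarith
  have hgradrel : (fun i => pd i F x₀) = Function.update q 0 (-(q 0)) := by
    funext i
    rcases eq_or_ne i 0 with rfl | hi
    · rw [Function.update_self, ← hsplit 0, pd_comp_refl_zero hdiffFP0]
    · rw [Function.update_of_ne hi, ← hsplit i, pd_comp_refl_ne hdiffFP0 hi]
  -- time derivative at the minimum
  set A : ℝ := deriv (fun r => U (P x₀) r) t₀ with hAdef
  set B : ℝ := deriv (fun r => U x₀ r) t₀ with hBdef
  have hA : HasDerivAt (fun r => U (P x₀) r) A t₀ := (hUregt _ hPx₀Ω t₀).hasDerivAt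
  have hB : HasDerivAt (fun r => U x₀ r) B t₀ := (hUregt _ hx₀Ω t₀).hasDerivAt
  have hw' : HasDerivAt (fun r => w x₀ r) (A - B) t₀ := hA.sub hB
  set E : ℝ := Real.exp (-γ * (t₀ - s)) with hEdef
  have hE : (0:ℝ) < E := Real.exp_pos _
  have hexp' : HasDerivAt (fun r => Real.exp (-γ * (r - s))) (E * (-γ)) t₀ := by
    have h1 : HasDerivAt (fun r : ℝ => -γ * (r - s)) (-γ) t₀ := by
      simpa using ((hasDerivAt_id t₀).sub_const s).const_mul (-γ)
    simpa [hEdef] using h1.exp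
  have hv' : HasDerivAt (fun r => v x₀ r) (E * (-γ) * w x₀ t₀ + E * (A - B)) t₀ := by
    have h2 := hexp'.mul hw'
    exact h2
  have hd0 : E * (-γ) * w x₀ t₀ + E * (A - B) ≤ 0 := by
    refine deriv_nonpos_of_min hv' hst₀ ?_
    intro r hr
    exact hmin (x₀, r) ⟨hx₀K, ⟨hr.1, le_trans hr.2.le ht₀mem.2⟩⟩
  have hAB : A - B ≤ γ * w x₀ t₀ := by
    have h1 : E * (A - B) ≤ E * (γ * w x₀ t₀) := by nlinarith
    exact le_of_mul_le_mul_left h1 hE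
  -- PDE at both points
  have hpdeP : A = lapl F (P x₀) + g t₀ (P x₀) (U (P x₀) t₀) q := hUpde (P x₀) hPx₀Ω t₀
  have hpdex : B = lapl F x₀ + g t₀ x₀ (U x₀ t₀) (fun i => pd i F x₀) := hUpde x₀ hx₀Ω t₀
  have hg1 : g t₀ (P x₀) (U (P x₀) t₀) q = g t₀ x₀ (U (P x₀) t₀) q :=
    hgsym t₀ (P x₀) x₀ _ q (fun i hi => reflHyp_apply_ne μ x₀ hi)
  have hg2 : g t₀ x₀ (U x₀ t₀) (fun i => pd i F x₀) = g t₀ x₀ (U x₀ t₀) q := by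
    rw [hgradrel]
    exact hgeven t₀ x₀ _ q
  have hGbound : |g t₀ x₀ (U (P x₀) t₀) q - g t₀ x₀ (U x₀ t₀) q|
      ≤ β0 * |w x₀ t₀| := by
    have := hglip t₀ x₀ (U (P x₀) t₀) (U x₀ t₀) q q
    simpa [hwdef] using this
  have hG : g t₀ x₀ (U (P x₀) t₀) q - g t₀ x₀ (U x₀ t₀) q ≥ β0 * w x₀ t₀ := by
    have h1 := neg_abs_le (g t₀ x₀ (U (P x₀) t₀) q - g t₀ x₀ (U x₀ t₀) q)
    have h2 : |w x₀ t₀| = -(w x₀ t₀) := abs_of_neg hwneg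
    nlinarith
  have hABeq : A - B = (lapl F (P x₀) - lapl F x₀)
      + (g t₀ x₀ (U (P x₀) t₀) q - g t₀ x₀ (U x₀ t₀) q) := by
    rw [hpdeP, hpdex, hg1, hg2]; ring
  have hfinal : β0 * w x₀ t₀ ≤ A - B := by
    rw [hABeq, ← hlapeq]
    linarith
  rw [hγ] at hAB
  nlinarith
end Key


end MP

open MP

/-- Lemma 4.2: along any bounded nonnegative entire solution of the symmetric parabolic
problem, the moving-plane functional `t ↦ Λ(U(·, t))` is nonincreasing. -/
theorem bigLambda_antitone_along_entire_solution (N : ℕ) [NeZero N] (Ω : Set (Fin N → ℝ))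
    (hΩbd : Bornology.IsBounded Ω) (hΩopen : IsOpen Ω) (hΩconn : IsConnected Ω)
    (hΩsym : reflHyp N 0 '' Ω = Ω)
    (hΩconv : ∀ x ∈ Ω, ∀ y ∈ Ω, (∀ i : Fin N, i ≠ 0 → x i = y i) → segment ℝ x y ⊆ Ω)
    -- condition (A): exterior measure-density condition at the boundary
    (hΩA : ∃ ς ∈ Ioo (0:ℝ) 1, ∃ R : ℝ, 0 < R ∧ ∀ x ∈ frontier Ω, ∀ ρ ∈ Ioo (0:ℝ) R,
      volume (Ω ∩ Metric.ball x ρ) ≤ ENNReal.ofReal ς * volume (Metric.ball x ρ))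
    (β0 : ℝ) (hβ0 : 0 < β0)
    (g : ℝ → (Fin N → ℝ) → ℝ → (Fin N → ℝ) → ℝ)
    (hgsym : ∀ t x y u p, (∀ i : Fin N, i ≠ 0 → x i = y i) → g t x u p = g t y u p)
    (hgeven : ∀ t x u (p : Fin N → ℝ), g t x u (Function.update p 0 (-(p 0))) = g t x u p)
    (hglip : ∀ t x u u' p p', |g t x u p - g t x u' p'| ≤ β0 * (|u - u'| + ‖p - p'‖))
    (U : (Fin N → ℝ) → ℝ → ℝ)
    (hUbd : ∃ M : ℝ, ∀ x t, |U x t| ≤ M)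
    (hUpos : ∀ x ∈ closure Ω, ∀ t : ℝ, 0 ≤ U x t)
    (hUcont : ContinuousOn (fun q : (Fin N → ℝ) × ℝ => U q.1 q.2) (closure Ω ×ˢ univ))
    (hUbc : ∀ x ∈ frontier Ω, ∀ t : ℝ, U x t = 0)
    (hUregt : ∀ x ∈ Ω, ∀ t : ℝ, DifferentiableAt ℝ (fun s => U x s) t)
    (hUregx : ∀ t : ℝ, ∀ x ∈ Ω, ContDiffAt ℝ 2 (fun y => U y t) x)
    (hUpde : ∀ x ∈ Ω, ∀ t : ℝ,
      deriv (fun s => U x s) t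
        = lapl (fun y => U y t) x + g t x (U x t) (fun i => pd i (fun y => U y t) x))
    :
    ∀ s t : ℝ, s ≤ t → bigLambda Ω (fun x => U x t) ≤ bigLambda Ω (fun x => U x s) := by
  intro s t hst
  have hΩne : Ω.Nonempty := hΩconn.nonempty
  have hbdd : BddAbove ((fun x : Fin N → ℝ => x 0) '' Ω) := by
    obtain ⟨Cc, hC⟩ := isBounded_iff_forall_norm_le.1 hΩbd
    refine ⟨Cc, ?_⟩
    rintro y ⟨x, hx, rfl⟩
    exact le_trans (le_abs_self _) (le_trans (norm_le_pi_norm x 0) (hC x hx))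
  have hle : ∀ x ∈ Ω, x 0 ≤ ellOf Ω := fun x hx => le_csSup hbdd ⟨x, hx, rfl⟩
  have hellpos : 0 < ellOf Ω := by
    obtain ⟨x, hx⟩ := hΩne
    rcases lt_trichotomy (x 0) 0 with h | h | h
    · have hx' : reflHyp N 0 x ∈ Ω := by rw [← hΩsym]; exact mem_image_of_mem _ hx
      have h2 : 0 < reflHyp N 0 x 0 := by rw [reflHyp_apply_zero]; linarith
      exact lt_of_lt_of_le h2 (hle _ hx')
    · obtain ⟨ε, hε, hball⟩ := Metric.isOpen_iff.1 hΩopen x hx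
      set y : Fin N → ℝ := Function.update x 0 (ε/2) with hydef
      have hy : y ∈ Ω := by
        apply hball
        rw [Metric.mem_ball]
        have hd : dist y x ≤ ε/2 := by
          rw [dist_pi_le_iff (by positivity)]
          intro i
          rcases eq_or_ne i 0 with rfl | hi
          · rw [hydef]
            simp only [Function.update_self]
            rw [Real.dist_eq, h]
            simp [abs_of_nonneg (by positivity : (0:ℝ) ≤ ε/2)]
          · rw [hydef]
            simp only [Function.update_of_ne hi]
            simp
            positivity
        linarith
      have hy0 : y 0 = ε/2 := Function.update_self _ _ _
      have : (0:ℝ) < ε/2 := by positivity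
      exact lt_of_lt_of_le (hy0 ▸ this) (hle y hy)
    · exact lt_of_lt_of_le h (hle x hx)
  have hmemS : ∀ z : (Fin N → ℝ) → ℝ, ellOf Ω ∈ {lam | lam ∈ Ioc 0 (ellOf Ω) ∧
      ∀ μ : ℝ, lam < μ → ∀ x ∈ capSet Ω μ, 0 ≤ z (reflHyp N μ x) - z x} := by
    intro z
    refine ⟨⟨hellpos, le_rfl⟩, ?_⟩
    intro μ hμ x hx
    have h1 := hle x hx.1
    have h2 := hx.2
    linarith
  unfold bigLambda
  apply csInf_le_csInf
  · exact ⟨0, fun y hy => hy.1.1.le⟩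
  · exact ⟨ellOf Ω, hmemS (fun x => U x s)⟩
  · rintro lam ⟨hlam, hall⟩
    refine ⟨hlam, ?_⟩
    intro μ hμ
    exact key_max_principle Ω hΩbd hΩopen hΩsym hΩconv β0 hβ0 g hgsym hgeven hglip U
      hUpos hUcont hUbc hUregt hUregx hUpde μ (lt_trans hlam.1 hμ) s t hst (hall μ hμ)
end
end

section
/- (From Lemma 4.2.) Let U be a bounded nonnegative entire solution as above, and suppose z belongs to ω(U), the ω-limit set of U in C_0(cl Ω). Then Λ(z) ≤ Λ(U(·, t)) for every t ∈ ℝ; consequently Λ(z) ≤ lim_{t→∞} Λ(U(·, t)). -/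
open Set Filter MeasureTheory Real

noncomputable section

variable {N : ℕ} [NeZero N]

/-- the linear part of the reflection -/
def reflA (N : ℕ) [NeZero N] : (Fin N → ℝ) →L[ℝ] (Fin N → ℝ) :=
  ContinuousLinearMap.id ℝ _ - (2:ℝ) • (ContinuousLinearMap.proj 0).smulRight (Pi.single 0 1)

lemma reflA_apply (v : Fin N → ℝ) : reflA N v = Function.update v 0 (-(v 0)) := by
  funext i
  rcases eq_or_ne i 0 with h | h
  · subst h; simp [reflA, Pi.single_apply]; ring
  · simp [reflA, Function.update_apply, h, Pi.single_apply]

lemma reflHyp_eq (lam : ℝ) :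
    reflHyp N lam = fun x => reflA N x + (Pi.single 0 (2*lam) : Fin N → ℝ) := by
  funext x i
  rcases eq_or_ne i 0 with h | h
  · subst h
    simp [reflHyp, reflA_apply, Function.update_apply, Pi.single_apply]
    ring
  · simp [reflHyp, reflA_apply, Function.update_apply, h, Pi.single_apply]

lemma hasFDerivAt_reflHyp (lam : ℝ) (x : Fin N → ℝ) :
    HasFDerivAt (reflHyp N lam) (reflA N) x := by
  rw [reflHyp_eq]
  exact (reflA N).hasFDerivAt.add_const _

lemma contDiff_reflHyp (lam : ℝ) : ContDiff ℝ 2 (reflHyp N lam) := by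
  rw [reflHyp_eq]
  exact (reflA N).contDiff.add contDiff_const

lemma continuous_reflHyp (lam : ℝ) : Continuous (reflHyp N lam) :=
  (contDiff_reflHyp lam).continuous

lemma reflA_single_zero :
    reflA N (Pi.single 0 1) = -(Pi.single 0 1 : Fin N → ℝ) := by
  rw [reflA_apply]
  funext j; rcases eq_or_ne j 0 with h2 | h2 <;>
    simp [Function.update_apply, h2, Pi.single_apply]

lemma reflA_single_ne {i : Fin N} (h : i ≠ 0) :
    reflA N (Pi.single i 1) = (Pi.single i 1 : Fin N → ℝ) := by
  rw [reflA_apply]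
  funext j; rcases eq_or_ne j 0 with h2 | h2
  · subst h2; simp [Function.update_apply, Pi.single_apply, Ne.symm h]
  · simp [Function.update_apply, h2]

lemma reflHyp_apply_ne (lam : ℝ) (x : Fin N → ℝ) {i : Fin N} (h : i ≠ 0) :
    reflHyp N lam x i = x i := by
  simp [reflHyp, Function.update_apply, h]

lemma reflHyp_apply_zero (lam : ℝ) (x : Fin N → ℝ) :
    reflHyp N lam x 0 = 2 * lam - x 0 := by simp [reflHyp]

section Geom
variable {N : ℕ} [NeZero N] {Ω : Set (Fin N → ℝ)}

lemma refl_zero_mem (hΩsym : reflHyp N 0 '' Ω = Ω) {x : Fin N → ℝ} (hx : x ∈ Ω) :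
    reflHyp N 0 x ∈ Ω := by
  rw [← hΩsym]; exact ⟨x, hx, rfl⟩

lemma refl_mem_of_cap
    (hΩsym : reflHyp N 0 '' Ω = Ω)
    (hΩconv : ∀ x ∈ Ω, ∀ y ∈ Ω, (∀ i : Fin N, i ≠ 0 → x i = y i) → segment ℝ x y ⊆ Ω)
    {μ : ℝ} (hμ : 0 < μ) {x : Fin N → ℝ} (hx : x ∈ capSet Ω μ) :
    reflHyp N μ x ∈ Ω := by
  obtain ⟨hxΩ, hx0⟩ := hx
  have hx0pos : 0 < x 0 := hμ.trans hx0
  have hx' : reflHyp N 0 x ∈ Ω := refl_zero_mem hΩsym hxΩ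
  have hagree : ∀ i : Fin N, i ≠ 0 → x i = reflHyp N 0 x i := fun i hi =>
    (reflHyp_apply_ne 0 x hi).symm
  apply hΩconv x hxΩ _ hx' hagree
  refine ⟨μ / x 0, 1 - μ / x 0, ?_, ?_, ?_, ?_⟩
  · positivity
  · have : μ / x 0 ≤ 1 := by
      rw [div_le_one hx0pos]; exact hx0.le
    linarith
  · ring
  · funext i
    rcases eq_or_ne i 0 with h | h
    · subst h
      simp only [Pi.add_apply, Pi.smul_apply, smul_eq_mul, reflHyp_apply_zero]
      field_simp
      ring
    · simp only [Pi.add_apply, Pi.smul_apply, smul_eq_mul, reflHyp_apply_ne _ _ h]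
      ring

lemma le_ellOf (hΩbd : Bornology.IsBounded Ω) {x : Fin N → ℝ} (hx : x ∈ Ω) :
    x 0 ≤ ellOf Ω := by
  apply le_csSup
  · exact ((LipschitzWith.eval 0).isBounded_image hΩbd).bddAbove
  · exact ⟨x, hx, rfl⟩

lemma capSet_empty_of_ell_lt (hΩbd : Bornology.IsBounded Ω) {μ : ℝ} (hμ : ellOf Ω < μ) :
    capSet Ω μ = ∅ := by
  ext x
  simp only [capSet, mem_setOf_eq, mem_empty_iff_false, iff_false, not_and, not_lt]
  intro hx
  exact le_of_lt (lt_of_le_of_lt (le_ellOf hΩbd hx) hμ)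

lemma ellOf_pos (hΩbd : Bornology.IsBounded Ω) (hΩopen : IsOpen Ω)
    (hΩne : Ω.Nonempty) (hΩsym : reflHyp N 0 '' Ω = Ω) : 0 < ellOf Ω := by
  obtain ⟨x, hx⟩ := hΩne
  obtain ⟨r, hr, hball⟩ := Metric.isOpen_iff.mp hΩopen x hx
  set y : Fin N → ℝ := Function.update x 0 (x 0 + r/2) with hy
  have hyΩ : y ∈ Ω := by
    apply hball
    rw [Metric.mem_ball]
    have : dist y x ≤ r/2 := by
      rw [dist_pi_le_iff (by positivity)]
      intro i
      rcases eq_or_ne i 0 with h | h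
      · subst h; simp [hy, Real.dist_eq, abs_of_nonneg, hr.le]
      · simp only [hy, Function.update_apply, h, if_false, Real.dist_eq, sub_self, abs_zero]
        positivity
    linarith
  have h1 : x 0 + r/2 ≤ ellOf Ω := by
    have := le_ellOf hΩbd hyΩ
    simpa [hy] using this
  have h2 : -(x 0) ≤ ellOf Ω := by
    have := le_ellOf hΩbd (refl_zero_mem hΩsym hx)
    simpa [reflHyp_apply_zero] using this
  linarith

end Geom

section Calc1D

/-- If `f` is strictly smaller at `t1` than on `[t0, t1)`, then `deriv f t1 ≤ 0`. -/
lemma deriv_nonpos_of_lt_left {f : ℝ → ℝ} {t0 t1 : ℝ} (h : t0 < t1)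
    (hf : DifferentiableAt ℝ f t1) (hlt : ∀ s, t0 ≤ s → s < t1 → f t1 < f s) :
    deriv f t1 ≤ 0 := by
  have hslope : Filter.Tendsto (slope f t1) (nhdsWithin t1 (Set.Iio t1)) (nhds (deriv f t1)) :=
    (hasDerivAt_iff_tendsto_slope.mp hf.hasDerivAt).mono_left
      (nhdsWithin_mono _ (fun s hs => ne_of_lt hs))
  refine le_of_tendsto hslope ?_
  have h1 : ∀ᶠ s in nhdsWithin t1 (Set.Iio t1), s ∈ Set.Ioi t0 :=
    eventually_nhdsWithin_of_eventually_nhds (eventually_gt_nhds h)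
  filter_upwards [h1, self_mem_nhdsWithin] with s hs1 hs2
  rw [slope_def_field]
  apply div_nonpos_of_nonneg_of_nonpos
  · have := hlt s (le_of_lt hs1) hs2
    linarith
  · simp only [Set.mem_Iio] at hs2
    linarith

/-- 1D second-derivative test at a local minimum (at `0`). -/
lemma second_deriv_nonneg_of_isLocalMin {ψ dψ : ℝ → ℝ} {d2 : ℝ}
    (hder : ∀ᶠ s in nhds (0:ℝ), HasDerivAt ψ (dψ s) s)
    (hd2 : HasDerivAt dψ d2 0) (h0 : dψ 0 = 0) (hmin : IsLocalMin ψ 0) : 0 ≤ d2 := by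
  by_contra hneg
  push_neg at hneg
  have hslope : Filter.Tendsto (slope dψ 0) (nhdsWithin 0 (Set.Ioi 0)) (nhds d2) :=
    (hasDerivAt_iff_tendsto_slope.mp hd2).mono_left
      (nhdsWithin_mono _ (fun s hs => ne_of_gt hs))
  have hev : ∀ᶠ s in nhdsWithin 0 (Set.Ioi 0), slope dψ 0 s < 0 :=
    hslope.eventually_lt_const hneg
  obtain ⟨u, hu, hsub⟩ := mem_nhdsGT_iff_exists_Ioo_subset.mp hev
  have hu0 : (0:ℝ) < u := hu
  obtain ⟨r, hr, hP⟩ := Metric.eventually_nhds_iff.mp (hder.and hmin)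
  set δ : ℝ := min (r/2) (u/2) with hδdef
  have hδ : 0 < δ := by positivity
  have hδr : δ < r := by
    calc δ ≤ r/2 := min_le_left _ _
    _ < r := by linarith
  have hδu : δ < u := by
    calc δ ≤ u/2 := min_le_right _ _
    _ < u := by linarith
  have hmem : ∀ s : ℝ, |s| < r → HasDerivAt ψ (dψ s) s ∧ ψ 0 ≤ ψ s := by
    intro s hs
    exact hP (by simpa [Real.dist_eq] using hs)
  have hanti : StrictAntiOn ψ (Set.Icc 0 δ) := by
    apply strictAntiOn_of_deriv_neg (convex_Icc 0 δ)
    · intro s hs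
      have habs : |s| < r := by
        rw [abs_lt]; constructor <;> [linarith [hs.1]; linarith [hs.2]]
      exact (hmem s habs).1.differentiableAt.continuousAt.continuousWithinAt
    · intro s hs
      rw [interior_Icc] at hs
      have hs0 : 0 < s := hs.1
      have hsu : s < u := lt_trans hs.2 hδu
      have hsl : slope dψ 0 s < 0 := hsub ⟨hs0, hsu⟩
      rw [slope_def_field, h0] at hsl
      have habs : |s| < r := by rw [abs_lt]; constructor <;> nlinarith [hs.2]
      rw [(hmem s habs).1.deriv]
      have : dψ s / s < 0 := by simpa using hsl
      by_contra hge
      push_neg at hge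
      have : 0 ≤ dψ s / s := div_nonneg hge hs0.le
      linarith
  have h1 : ψ δ < ψ 0 := hanti (Set.left_mem_Icc.mpr hδ.le) (Set.right_mem_Icc.mpr hδ.le) hδ
  have h2 : ψ 0 ≤ ψ δ := (hmem δ (by rw [abs_of_pos hδ]; exact hδr)).2
  linarith

end Calc1D

section PD
variable {N : ℕ} [NeZero N]

lemma differentiableAt_pd {f : (Fin N → ℝ) → ℝ} {x : Fin N → ℝ}
    (h2 : ContDiffAt ℝ 2 f x) (i : Fin N) : DifferentiableAt ℝ (pd i f) x := by
  have h1 : ContDiffAt ℝ 1 (fderiv ℝ f) x := h2.fderiv_right (by norm_num)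
  exact (h1.differentiableAt (by norm_num)).clm_apply (differentiableAt_const _)

lemma pd_comp_refl {μ : ℝ} {f : (Fin N → ℝ) → ℝ} {y : Fin N → ℝ}
    (hy : DifferentiableAt ℝ f (reflHyp N μ y)) (i : Fin N) :
    pd i (fun w => f (reflHyp N μ w)) y
      = (if i = 0 then (-1:ℝ) else 1) * pd i f (reflHyp N μ y) := by
  have hc : fderiv ℝ (fun w => f (reflHyp N μ w)) y
      = (fderiv ℝ f (reflHyp N μ y)).comp (reflA N) :=
    (hy.hasFDerivAt.comp y (hasFDerivAt_reflHyp μ y)).fderiv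
  show fderiv ℝ (fun w => f (reflHyp N μ w)) y (Pi.single i 1) = _
  rw [hc]
  rcases eq_or_ne i 0 with h | h
  · subst h
    simp [ContinuousLinearMap.comp_apply, reflA_single_zero, pd]
  · simp [ContinuousLinearMap.comp_apply, reflA_single_ne h, pd, h]

lemma pd2_comp_refl {μ : ℝ} {f : (Fin N → ℝ) → ℝ} {x : Fin N → ℝ}
    (h2 : ContDiffAt ℝ 2 f (reflHyp N μ x))
    (hd : ∀ᶠ y in nhds x, DifferentiableAt ℝ f (reflHyp N μ y)) (i : Fin N) :
    pd i (pd i (fun w => f (reflHyp N μ w))) x = pd i (pd i f) (reflHyp N μ x) := by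
  have hev : (pd i (fun w => f (reflHyp N μ w))) =ᶠ[nhds x]
      fun y => (if i = 0 then (-1:ℝ) else 1) * pd i f (reflHyp N μ y) :=
    hd.mono fun y hy => pd_comp_refl hy i
  have hRdiff : DifferentiableAt ℝ (reflHyp N μ) x :=
    (hasFDerivAt_reflHyp μ x).differentiableAt
  have hdiff : DifferentiableAt ℝ (fun y => pd i f (reflHyp N μ y)) x :=
    (differentiableAt_pd h2 i).comp x hRdiff
  have hstep : pd i (pd i (fun w => f (reflHyp N μ w))) x
      = fderiv ℝ (fun y => (if i = 0 then (-1:ℝ) else 1) * pd i f (reflHyp N μ y)) x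
          (Pi.single i 1) := by
    show fderiv ℝ (pd i (fun w => f (reflHyp N μ w))) x (Pi.single i 1) = _
    rw [hev.fderiv_eq]
  rw [hstep, fderiv_const_mul hdiff]
  have hc : fderiv ℝ (fun y => pd i f (reflHyp N μ y)) x
      = (fderiv ℝ (pd i f) (reflHyp N μ x)).comp (reflA N) :=
    ((differentiableAt_pd h2 i).hasFDerivAt.comp x (hasFDerivAt_reflHyp μ x)).fderiv
  rw [hc]
  rcases eq_or_ne i 0 with h | h
  · subst h
    simp [ContinuousLinearMap.comp_apply, reflA_single_zero, pd]
  · simp [ContinuousLinearMap.comp_apply, reflA_single_ne h, pd, h]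

lemma pd_sub {f h : (Fin N → ℝ) → ℝ} {x : Fin N → ℝ}
    (hf : DifferentiableAt ℝ f x) (hh : DifferentiableAt ℝ h x) (i : Fin N) :
    pd i (fun y => f y - h y) x = pd i f x - pd i h x := by
  show fderiv ℝ (fun y => f y - h y) x (Pi.single i 1) = _
  rw [fderiv_fun_sub hf hh]
  rfl

lemma pd2_sub {f h : (Fin N → ℝ) → ℝ} {x : Fin N → ℝ}
    (hf2 : ContDiffAt ℝ 2 f x) (hh2 : ContDiffAt ℝ 2 h x)
    (hfd : ∀ᶠ y in nhds x, DifferentiableAt ℝ f y)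
    (hhd : ∀ᶠ y in nhds x, DifferentiableAt ℝ h y) (i : Fin N) :
    pd i (pd i (fun y => f y - h y)) x = pd i (pd i f) x - pd i (pd i h) x := by
  have hev : pd i (fun y => f y - h y) =ᶠ[nhds x] fun y => pd i f y - pd i h y :=
    (hfd.and hhd).mono fun y hy => pd_sub hy.1 hy.2 i
  show fderiv ℝ (pd i (fun y => f y - h y)) x (Pi.single i 1) = _
  rw [hev.fderiv_eq, fderiv_fun_sub (differentiableAt_pd hf2 i) (differentiableAt_pd hh2 i)]
  rfl

/-- Multivariate second-derivative test: at an interior local minimum of a `C²` function,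
each pure second partial is nonnegative. -/
lemma pd2_nonneg_of_isLocalMin {φ : (Fin N → ℝ) → ℝ} {x : Fin N → ℝ}
    (h2 : ContDiffAt ℝ 2 φ x) (hd : ∀ᶠ y in nhds x, DifferentiableAt ℝ φ y)
    (hmin : IsLocalMin φ x) (i : Fin N) : 0 ≤ pd i (pd i φ) x := by
  set e : Fin N → ℝ := Pi.single i 1 with he
  set L : ℝ → Fin N → ℝ := fun s => x + s • e with hL
  have hL0 : L 0 = x := by simp [hL]
  have hLd : ∀ s : ℝ, HasDerivAt L e s := by
    intro s
    simpa [hL] using ((hasDerivAt_id s).smul_const e).const_add x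
  have hLcont : Continuous L := by unfold L; fun_prop
  have hLt : Filter.Tendsto L (nhds 0) (nhds x) := hLcont.tendsto' 0 x hL0
  have hψd : ∀ᶠ s in nhds (0:ℝ), HasDerivAt (φ ∘ L) (pd i φ (L s)) s := by
    filter_upwards [hLt.eventually hd] with s hs
    exact hs.hasFDerivAt.comp_hasDerivAt s (hLd s)
  have hψmin : IsLocalMin (φ ∘ L) 0 := by
    have hm : IsMinFilter φ (nhds x) (L 0) := by rw [hL0]; exact hmin
    exact hm.comp_tendsto hLt
  have hpdφ : DifferentiableAt ℝ (pd i φ) x := differentiableAt_pd h2 i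
  have hd2 : HasDerivAt (fun s => pd i φ (L s)) (pd i (pd i φ) x) 0 := by
    have hF : HasFDerivAt (pd i φ) (fderiv ℝ (pd i φ) x) (L 0) := hL0.symm ▸ hpdφ.hasFDerivAt
    exact hF.comp_hasDerivAt 0 (hLd 0)
  have h00 : pd i φ (L 0) = 0 := by
    have hder0 : HasDerivAt (φ ∘ L) (pd i φ (L 0)) 0 := hψd.self_of_nhds
    rw [← hder0.deriv]
    exact hψmin.deriv_eq_zero
  exact second_deriv_nonneg_of_isLocalMin hψd hd2 h00 hψmin

end PD

section Parabolic
variable {N : ℕ} [NeZero N]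

lemma parabolic_refl_comparison
    {Ω : Set (Fin N → ℝ)}
    (hΩbd : Bornology.IsBounded Ω) (hΩopen : IsOpen Ω)
    (hΩsym : reflHyp N 0 '' Ω = Ω)
    (hΩconv : ∀ x ∈ Ω, ∀ y ∈ Ω, (∀ i : Fin N, i ≠ 0 → x i = y i) → segment ℝ x y ⊆ Ω)
    {β0 : ℝ} (hβ0 : 0 < β0)
    {g : ℝ → (Fin N → ℝ) → ℝ → (Fin N → ℝ) → ℝ}
    (hgsym : ∀ t x y u p, (∀ i : Fin N, i ≠ 0 → x i = y i) → g t x u p = g t y u p)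
    (hgeven : ∀ t x u (p : Fin N → ℝ), g t x u (Function.update p 0 (-(p 0))) = g t x u p)
    (hglip : ∀ t x u u' p p', |g t x u p - g t x u' p'| ≤ β0 * (|u - u'| + ‖p - p'‖))
    {U : (Fin N → ℝ) → ℝ → ℝ}
    (hUpos : ∀ x ∈ closure Ω, ∀ t : ℝ, 0 ≤ U x t)
    (hUcont : ContinuousOn (fun q : (Fin N → ℝ) × ℝ => U q.1 q.2) (closure Ω ×ˢ univ))
    (hUbc : ∀ x ∈ frontier Ω, ∀ t : ℝ, U x t = 0)
    (hUregt : ∀ x ∈ Ω, ∀ t : ℝ, DifferentiableAt ℝ (fun s => U x s) t)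
    (hUregx : ∀ t : ℝ, ∀ x ∈ Ω, ContDiffAt ℝ 2 (fun y => U y t) x)
    (hUpde : ∀ x ∈ Ω, ∀ t : ℝ,
      deriv (fun s => U x s) t
        = lapl (fun y => U y t) x + g t x (U x t) (fun i => pd i (fun y => U y t) x))
    {μ : ℝ} (hμ : 0 < μ) {t0 T : ℝ}
    (h0 : ∀ x ∈ capSet Ω μ, 0 ≤ U (reflHyp N μ x) t0 - U x t0) :
    ∀ x ∈ capSet Ω μ, ∀ s ∈ Icc t0 T, 0 ≤ U (reflHyp N μ x) s - U x s := by
  set R := reflHyp N μ with hRdef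
  set C := capSet Ω μ with hCdef
  have hCeq : C = Ω ∩ (fun x : Fin N → ℝ => x 0) ⁻¹' Ioi μ := rfl
  have hCopen : IsOpen C := by
    rw [hCeq]; exact hΩopen.inter (isOpen_Ioi.preimage (continuous_apply 0))
  have hCΩ : C ⊆ Ω := fun x hx => hx.1
  have hRC : ∀ x ∈ C, R x ∈ Ω := fun x hx => refl_mem_of_cap hΩsym hΩconv hμ hx
  have hclC : closure C ⊆ closure Ω := closure_mono hCΩ
  have hRcl : ∀ x ∈ closure C, R x ∈ closure Ω := by
    intro x hx
    have h2 : R '' closure C ⊆ closure (R '' C) :=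
      image_closure_subset_closure_image (continuous_reflHyp μ)
    have h3 : closure (R '' C) ⊆ closure Ω := by
      apply closure_minimal _ isClosed_closure
      rintro _ ⟨y, hy, rfl⟩
      exact subset_closure (hRC y hy)
    exact h3 (h2 ⟨x, hx, rfl⟩)
  have hKc : IsCompact (closure C) := (hΩbd.subset hCΩ).isCompact_closure
  have hVcont : ContinuousOn (fun q : (Fin N → ℝ) × ℝ => U (R q.1) q.2 - U q.1 q.2)
      (closure C ×ˢ (univ : Set ℝ)) := by
    apply ContinuousOn.sub
    · apply hUcont.comp
        (Continuous.continuousOn (((continuous_reflHyp μ).comp continuous_fst).prodMk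
          continuous_snd))
      intro q hq
      exact ⟨hRcl q.1 hq.1, mem_univ _⟩
    · exact hUcont.mono (prod_mono hclC (subset_refl _))
  have hbdry : ∀ x ∈ closure C \ C, ∀ s : ℝ, 0 ≤ U (R x) s - U x s := by
    intro x hx s
    rcases em (x ∈ Ω) with hxΩ | hxΩ
    · have hge : μ ≤ x 0 := by
        have hsub : closure C ⊆ {y : Fin N → ℝ | μ ≤ y 0} := by
          apply closure_minimal _ (isClosed_le continuous_const (continuous_apply 0))
          exact fun y hy => le_of_lt hy.2
        exact hsub hx.1
      have heq : x 0 = μ := by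
        rcases eq_or_lt_of_le hge with h | h
        · exact h.symm
        · exact absurd (⟨hxΩ, h⟩ : x ∈ C) hx.2
      have hRx : R x = x := by
        funext i
        rcases eq_or_ne i 0 with h | h
        · subst h; rw [hRdef, reflHyp_apply_zero, heq]; ring
        · exact reflHyp_apply_ne _ _ h
      rw [hRx]; simp
    · have hxfr : x ∈ frontier Ω := by
        rw [hΩopen.frontier_eq]
        exact ⟨hclC hx.1, hxΩ⟩
      rw [hUbc x hxfr s]
      simpa using hUpos (R x) (hRcl x hx.1) s
  have hinit : ∀ x ∈ closure C, 0 ≤ U (R x) t0 - U x t0 := by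
    intro x hx
    by_cases hxC : x ∈ C
    · exact h0 x hxC
    · exact hbdry x ⟨hx, hxC⟩ t0
  have main : ∀ ε : ℝ, 0 < ε → ∀ x ∈ closure C, ∀ s ∈ Icc t0 T,
      -(ε * Real.exp (2*β0*(s - t0))) < U (R x) s - U x s := by
    intro ε hε
    by_contra hcon
    push_neg at hcon
    obtain ⟨x₁, hx₁, s₁, hs₁, hle⟩ := hcon
    set F : (Fin N → ℝ) × ℝ → ℝ :=
      fun q => U (R q.1) q.2 - U q.1 q.2 + ε * Real.exp (2*β0*(q.2 - t0)) with hFdef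
    have hFcont : ContinuousOn F (closure C ×ˢ (univ : Set ℝ)) := by
      apply hVcont.add
      exact (Continuous.continuousOn (by fun_prop))
    set K : Set ((Fin N → ℝ) × ℝ) := closure C ×ˢ Icc t0 T with hKdef
    have hKsub : K ⊆ closure C ×ˢ (univ : Set ℝ) := prod_mono (subset_refl _) (subset_univ _)
    have hKcomp : IsCompact K := hKc.prod isCompact_Icc
    set S : Set ((Fin N → ℝ) × ℝ) := {q ∈ K | F q ≤ 0} with hSdef
    have hSne : S.Nonempty := by
      refine ⟨(x₁, s₁), ⟨⟨hx₁, hs₁⟩, ?_⟩⟩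
      rw [hFdef]; dsimp only; linarith
    have hSclosed : IsClosed S := by
      have hSeq : S = K ∩ F ⁻¹' Iic 0 := by
        ext q; simp [hSdef, mem_sep_iff]
      rw [hSeq]
      exact ContinuousOn.preimage_isClosed_of_isClosed (hFcont.mono hKsub)
        hKcomp.isClosed isClosed_Iic
    have hScomp : IsCompact S := hKcomp.of_isClosed_subset hSclosed (fun q hq => hq.1)
    obtain ⟨qq, hqqS, hqqmin⟩ := hScomp.exists_isMinOn hSne continuous_snd.continuousOn
    have hxxcl : qq.1 ∈ closure C := hqqS.1.1
    have htt : qq.2 ∈ Icc t0 T := hqqS.1.2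
    have hFqq : F qq ≤ 0 := hqqS.2
    have hFval : F qq = U (R qq.1) qq.2 - U qq.1 qq.2 + ε * Real.exp (2*β0*(qq.2 - t0)) := rfl
    have ht0lt : t0 < qq.2 := by
      rcases eq_or_lt_of_le htt.1 with h | h
      · exfalso
        have h1 : 0 ≤ U (R qq.1) t0 - U qq.1 t0 := hinit _ hxxcl
        rw [hFval, ← h] at hFqq
        simp only [sub_self, mul_zero, Real.exp_zero, mul_one] at hFqq
        linarith
      · exact h
    have hbefore : ∀ x ∈ closure C, ∀ s, t0 ≤ s → s < qq.2 → 0 < F (x, s) := by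
      intro x hx s hs1 hs2
      by_contra hc
      push_neg at hc
      have hmem : (x, s) ∈ S := ⟨⟨hx, ⟨hs1, le_trans hs2.le htt.2⟩⟩, hc⟩
      have h2 : qq.2 ≤ s := hqqmin hmem
      exact absurd h2 (not_le.mpr hs2)
    have hatt : ∀ x ∈ closure C, 0 ≤ F (x, qq.2) := by
      intro x hx
      have hcx : Continuous (fun s : ℝ => F (x, s)) := by
        have h1 : ContinuousOn (fun s : ℝ => F (x, s)) univ := by
          apply (hFcont.comp (Continuous.continuousOn (Continuous.prodMk_right x)))
          intro s _
          exact ⟨hx, mem_univ _⟩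
        exact continuousOn_univ.mp h1
      have hne : (nhdsWithin qq.2 (Ico t0 qq.2)).NeBot := by
        apply mem_closure_iff_nhdsWithin_neBot.mp
        rw [closure_Ico (ne_of_lt ht0lt)]
        exact ⟨ht0lt.le, le_refl _⟩
      have htend : Filter.Tendsto (fun s => F (x, s)) (nhdsWithin qq.2 (Ico t0 qq.2))
          (nhds (F (x, qq.2))) :=
        (hcx.tendsto qq.2).mono_left nhdsWithin_le_nhds
      refine ge_of_tendsto htend ?_
      filter_upwards [self_mem_nhdsWithin] with s hs
      exact (hbefore x hx s hs.1 hs.2).le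
    have hFzero : F qq = 0 := le_antisymm hFqq (by simpa using hatt qq.1 hxxcl)
    set E : ℝ := Real.exp (2*β0*(qq.2 - t0)) with hE
    have hEpos : 0 < E := Real.exp_pos _
    have hVval : U (R qq.1) qq.2 - U qq.1 qq.2 = -(ε * E) := by
      have := hFzero
      rw [hFval] at this
      rw [hE]
      linarith
    have hxxC : qq.1 ∈ C := by
      by_contra hc
      have h1 := hbdry qq.1 ⟨hxxcl, hc⟩ qq.2
      rw [hVval] at h1
      nlinarith
    have hxxΩ : qq.1 ∈ Ω := hxxC.1
    have hRxxΩ : R qq.1 ∈ Ω := hRC _ hxxC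
    -- local minimum in space of V(·, tt)
    have hlocmin : IsLocalMin (fun y => U (R y) qq.2 - U y qq.2) qq.1 := by
      have hCnhds : C ∈ nhds qq.1 := hCopen.mem_nhds hxxC
      filter_upwards [hCnhds] with y hy
      have h1 : 0 ≤ F (y, qq.2) := hatt y (subset_closure hy)
      have h2 : F (y, qq.2) = U (R y) qq.2 - U y qq.2 + ε * E := rfl
      show U (R qq.1) qq.2 - U qq.1 qq.2 ≤ U (R y) qq.2 - U y qq.2
      rw [hVval]
      rw [h2] at h1
      linarith
    -- differentiability setup
    have hWopen : IsOpen (Ω ∩ R ⁻¹' Ω) := hΩopen.inter (hΩopen.preimage (continuous_reflHyp μ))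
    have hWnhds : Ω ∩ R ⁻¹' Ω ∈ nhds qq.1 := hWopen.mem_nhds ⟨hxxΩ, hRxxΩ⟩
    have hf1C2 : ∀ y ∈ Ω, ContDiffAt ℝ 2 (fun w => U w qq.2) y := fun y hy => hUregx qq.2 y hy
    have hf1d : ∀ y ∈ Ω, DifferentiableAt ℝ (fun w => U w qq.2) y := fun y hy =>
      (hf1C2 y hy).differentiableAt (by norm_num)
    have hfRd : ∀ᶠ y in nhds qq.1, DifferentiableAt ℝ (fun w => U w qq.2) (R y) := by
      filter_upwards [hWnhds] with y hy
      exact hf1d _ hy.2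
    have hfd : ∀ᶠ y in nhds qq.1, DifferentiableAt ℝ (fun w => U w qq.2) y := by
      filter_upwards [hWnhds] with y hy
      exact hf1d _ hy.1
    have hcompd : ∀ᶠ y in nhds qq.1, DifferentiableAt ℝ (fun w => U (R w) qq.2) y :=
      hfRd.mono fun y hy => hy.comp y (hasFDerivAt_reflHyp μ y).differentiableAt
    have hφd : ∀ᶠ y in nhds qq.1, DifferentiableAt ℝ (fun y => U (R y) qq.2 - U y qq.2) y :=
      (hcompd.and hfd).mono fun y hy => hy.1.sub hy.2
    have hRcomp2 : ContDiffAt ℝ 2 (fun w => U (R w) qq.2) qq.1 :=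
      (hf1C2 _ hRxxΩ).comp qq.1 (contDiff_reflHyp μ).contDiffAt
    have hφ2 : ContDiffAt ℝ 2 (fun y => U (R y) qq.2 - U y qq.2) qq.1 :=
      hRcomp2.sub (hf1C2 _ hxxΩ)
    have hgrad : ∀ i, pd i (fun y => U (R y) qq.2 - U y qq.2) qq.1 = 0 := by
      intro i
      have hz := hlocmin.fderiv_eq_zero
      show fderiv ℝ (fun y => U (R y) qq.2 - U y qq.2) qq.1 (Pi.single i 1) = 0
      rw [hz]
      rfl
    have hpd_eq : ∀ i, pd i (fun w => U (R w) qq.2) qq.1 = pd i (fun w => U w qq.2) qq.1 := by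
      intro i
      have hsplit := pd_sub (hcompd.self_of_nhds) (hf1d _ hxxΩ) i
      have h0' := hgrad i
      rw [h0'] at hsplit
      linarith
    have hptilde : (fun i => pd i (fun w => U w qq.2) (R qq.1))
        = Function.update (fun i => pd i (fun w => U w qq.2) qq.1) 0
            (-((fun i => pd i (fun w => U w qq.2) qq.1) 0)) := by
      funext i
      rcases eq_or_ne i 0 with h | h
      · subst h
        have h1 := pd_comp_refl (μ := μ) (hf1d _ hRxxΩ) (0 : Fin N)
        rw [if_pos rfl] at h1
        have h2 := hpd_eq 0
        rw [Function.update_self]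
        dsimp only
        rw [← h2, h1]
        ring
      · have h1 := pd_comp_refl (μ := μ) (hf1d _ hRxxΩ) i
        rw [if_neg h, one_mul] at h1
        rw [Function.update_of_ne h]
        show pd i (fun w => U w qq.2) (R qq.1) = pd i (fun w => U w qq.2) qq.1
        rw [← h1, hpd_eq i]
    have hlapl : lapl (fun w => U w qq.2) qq.1 ≤ lapl (fun w => U w qq.2) (R qq.1) := by
      have hsum : lapl (fun w => U w qq.2) (R qq.1) - lapl (fun w => U w qq.2) qq.1
          = ∑ i, pd i (pd i (fun y => U (R y) qq.2 - U y qq.2)) qq.1 := by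
        rw [lapl, lapl, ← Finset.sum_sub_distrib]
        apply Finset.sum_congr rfl
        intro i _
        rw [pd2_sub hRcomp2 (hf1C2 _ hxxΩ) hcompd hfd i,
          pd2_comp_refl (hf1C2 _ hRxxΩ) hfRd i]
      have hnn : 0 ≤ ∑ i, pd i (pd i (fun y => U (R y) qq.2 - U y qq.2)) qq.1 :=
        Finset.sum_nonneg fun i _ => pd2_nonneg_of_isLocalMin hφ2 hφd hlocmin i
      linarith
    have hpde1 := hUpde (R qq.1) hRxxΩ qq.2
    have hpde2 := hUpde qq.1 hxxΩ qq.2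
    have hgeq : g qq.2 (R qq.1) (U (R qq.1) qq.2) (fun i => pd i (fun w => U w qq.2) (R qq.1))
        = g qq.2 qq.1 (U (R qq.1) qq.2) (fun i => pd i (fun w => U w qq.2) qq.1) := by
      rw [hgsym _ _ qq.1 _ _ (fun i hi => reflHyp_apply_ne μ qq.1 hi), hptilde, hgeven]
    have hgbound : -(β0 * (ε * E)) ≤
        g qq.2 qq.1 (U (R qq.1) qq.2) (fun i => pd i (fun w => U w qq.2) qq.1)
          - g qq.2 qq.1 (U qq.1 qq.2) (fun i => pd i (fun w => U w qq.2) qq.1) := by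
      have hlip := hglip qq.2 qq.1 (U (R qq.1) qq.2) (U qq.1 qq.2)
        (fun i => pd i (fun w => U w qq.2) qq.1) (fun i => pd i (fun w => U w qq.2) qq.1)
      rw [sub_self, norm_zero, add_zero] at hlip
      have habs : |U (R qq.1) qq.2 - U qq.1 qq.2| = ε * E := by
        rw [hVval, abs_neg, abs_of_pos (by positivity)]
      rw [habs] at hlip
      have := (abs_le.mp hlip).1
      linarith
    have hder1 : DifferentiableAt ℝ (fun s => U (R qq.1) s) qq.2 := hUregt _ hRxxΩ qq.2
    have hder2 : DifferentiableAt ℝ (fun s => U qq.1 s) qq.2 := hUregt _ hxxΩ qq.2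
    have hVder : -(β0 * (ε * E)) ≤ deriv (fun s => U (R qq.1) s - U qq.1 s) qq.2 := by
      rw [deriv_fun_sub hder1 hder2, hpde1, hpde2, hgeq]
      have := hgbound
      linarith
    have hexp_der : HasDerivAt (fun s => ε * Real.exp (2*β0*(s - t0)))
        (ε * (Real.exp (2*β0*(qq.2 - t0)) * (2*β0))) qq.2 := by
      have h1 : HasDerivAt (fun s : ℝ => 2*β0*(s - t0)) (2*β0) qq.2 := by
        simpa using ((hasDerivAt_id qq.2).sub_const t0).const_mul (2*β0)
      exact h1.exp.const_mul ε
    have hVd : HasDerivAt (fun s => U (R qq.1) s - U qq.1 s)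
        (deriv (fun s => U (R qq.1) s - U qq.1 s) qq.2) qq.2 :=
      (hder1.sub hder2).hasDerivAt
    have hfT_der : HasDerivAt (fun s => U (R qq.1) s - U qq.1 s + ε * Real.exp (2*β0*(s - t0)))
        (deriv (fun s => U (R qq.1) s - U qq.1 s) qq.2 + ε * (E * (2*β0))) qq.2 := by
      rw [hE]
      exact hVd.add hexp_der
    have hlt : ∀ s, t0 ≤ s → s < qq.2 →
        (fun s => U (R qq.1) s - U qq.1 s + ε * Real.exp (2*β0*(s - t0))) qq.2
          < (fun s => U (R qq.1) s - U qq.1 s + ε * Real.exp (2*β0*(s - t0))) s := by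
      intro s h1 h2
      have hb := hbefore qq.1 hxxcl s h1 h2
      have h2' : F (qq.1, s) = U (R qq.1) s - U qq.1 s + ε * Real.exp (2*β0*(s - t0)) := rfl
      dsimp only
      rw [hVval, ← hE]
      rw [h2'] at hb
      linarith
    have hd0 := deriv_nonpos_of_lt_left ht0lt hfT_der.differentiableAt hlt
    rw [hfT_der.deriv] at hd0
    have hprod : ε * (E * (2*β0)) = 2 * (β0 * (ε * E)) := by ring
    rw [hprod] at hd0
    have hpos : 0 < β0 * (ε * E) := by positivity
    linarith
  intro x hx s hs
  by_contra hneg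
  push_neg at hneg
  set c : ℝ := Real.exp (2*β0*(s - t0)) with hc
  have hcpos : 0 < c := Real.exp_pos _
  have hnum : 0 < -(U (R x) s - U x s) := by linarith
  have hε : 0 < -(U (R x) s - U x s) / c := div_pos hnum hcpos
  have hmain := main _ hε x (subset_closure hx) s hs
  rw [← hc] at hmain
  rw [div_mul_cancel₀ _ (ne_of_gt hcpos)] at hmain
  linarith

end Parabolic

/-- From Lemma 4.2: if `z` belongs to the ω-limit set of a bounded nonnegative entire
solution `U` (in the uniform topology on the closure of `Ω`), then `Λ(z) ≤ Λ(U(·, t))`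
for every `t`, hence `Λ(z)` is at most the limit of `Λ(U(·, t))` as `t → ∞`. -/
theorem bigLambda_le_on_omega_limit (N : ℕ) [NeZero N] (Ω : Set (Fin N → ℝ))
    (hΩbd : Bornology.IsBounded Ω) (hΩopen : IsOpen Ω) (hΩconn : IsConnected Ω)
    (hΩsym : reflHyp N 0 '' Ω = Ω)
    (hΩconv : ∀ x ∈ Ω, ∀ y ∈ Ω, (∀ i : Fin N, i ≠ 0 → x i = y i) → segment ℝ x y ⊆ Ω)
    -- condition (A): exterior measure-density condition at the boundary
    (hΩA : ∃ ς ∈ Ioo (0:ℝ) 1, ∃ R : ℝ, 0 < R ∧ ∀ x ∈ frontier Ω, ∀ ρ ∈ Ioo (0:ℝ) R,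
      volume (Ω ∩ Metric.ball x ρ) ≤ ENNReal.ofReal ς * volume (Metric.ball x ρ))
    (β0 : ℝ) (hβ0 : 0 < β0)
    (g : ℝ → (Fin N → ℝ) → ℝ → (Fin N → ℝ) → ℝ)
    (hgsym : ∀ t x y u p, (∀ i : Fin N, i ≠ 0 → x i = y i) → g t x u p = g t y u p)
    (hgeven : ∀ t x u (p : Fin N → ℝ), g t x u (Function.update p 0 (-(p 0))) = g t x u p)
    (hglip : ∀ t x u u' p p', |g t x u p - g t x u' p'| ≤ β0 * (|u - u'| + ‖p - p'‖))
    (U : (Fin N → ℝ) → ℝ → ℝ)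
    (hUbd : ∃ M : ℝ, ∀ x t, |U x t| ≤ M)
    (hUpos : ∀ x ∈ closure Ω, ∀ t : ℝ, 0 ≤ U x t)
    (hUcont : ContinuousOn (fun q : (Fin N → ℝ) × ℝ => U q.1 q.2) (closure Ω ×ˢ univ))
    (hUbc : ∀ x ∈ frontier Ω, ∀ t : ℝ, U x t = 0)
    (hUregt : ∀ x ∈ Ω, ∀ t : ℝ, DifferentiableAt ℝ (fun s => U x s) t)
    (hUregx : ∀ t : ℝ, ∀ x ∈ Ω, ContDiffAt ℝ 2 (fun y => U y t) x)
    (hUpde : ∀ x ∈ Ω, ∀ t : ℝ,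
      deriv (fun s => U x s) t
        = lapl (fun y => U y t) x + g t x (U x t) (fun i => pd i (fun y => U y t) x))
    (z : (Fin N → ℝ) → ℝ)
    (hz : ∃ tn : ℕ → ℝ, Tendsto tn atTop atTop ∧
      TendstoUniformlyOn (fun n x => U x (tn n)) z atTop (closure Ω)) :
    ∀ t : ℝ, bigLambda Ω z ≤ bigLambda Ω (fun x => U x t) := by
  obtain ⟨tn, htn, hzU⟩ := hz
  intro t
  have hΩne : Ω.Nonempty := hΩconn.nonempty
  have hell : 0 < ellOf Ω := ellOf_pos hΩbd hΩopen hΩne hΩsym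
  unfold bigLambda
  apply csInf_le_csInf
  · exact ⟨0, fun lam hlam => hlam.1.1.le⟩
  · refine ⟨ellOf Ω, ⟨⟨hell, le_refl _⟩, ?_⟩⟩
    intro μ hμ x hx
    exfalso
    rw [capSet_empty_of_ell_lt hΩbd hμ] at hx
    exact hx
  · intro lam hlam
    obtain ⟨hlam1, hlam2⟩ := hlam
    refine ⟨hlam1, ?_⟩
    intro μ hμ x hx
    have hμ0 : 0 < μ := lt_trans hlam1.1 hμ
    have hxΩ : x ∈ Ω := hx.1
    have hRxΩ : reflHyp N μ x ∈ Ω := refl_mem_of_cap hΩsym hΩconv hμ0 hx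
    have h0 : ∀ y ∈ capSet Ω μ, 0 ≤ U (reflHyp N μ y) t - U y t := fun y hy => hlam2 μ hμ y hy
    have h1 : Tendsto (fun n => U (reflHyp N μ x) (tn n) - U x (tn n)) atTop
        (nhds (z (reflHyp N μ x) - z x)) :=
      (hzU.tendsto_at (subset_closure hRxΩ)).sub (hzU.tendsto_at (subset_closure hxΩ))
    have h2 : ∀ᶠ n in atTop, 0 ≤ U (reflHyp N μ x) (tn n) - U x (tn n) := by
      filter_upwards [htn.eventually_ge_atTop t] with n hn
      exact parabolic_refl_comparison hΩbd hΩopen hΩsym hΩconv hβ0 hgsym hgeven hglip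
        hUpos hUcont hUbc hUregt hUregx hUpde hμ0 h0 x hx (tn n) ⟨hn, le_refl _⟩
    exact ge_of_tendsto h1 h2
end
end

section
/- (Lemma 5.1, semicontinuity of Λ on E_0 vs E_+.) Let E be the set of equilibria of the autonomous problem and E_+ = {z ∈ E : Λ(z) > 0}, E_0 = {z ∈ E : Λ(z) = 0}. Then for each z ∈ E_+, the distance in the supremum norm from z to E_0 is strictly positive: dist_{C_0(cl Ω)}(z, E_0) > 0. -/
open Set Filter MeasureTheory Real

noncomputable section

/-- `z` is a nonnegative equilibrium of `0 = Δz + f(x, z, ∇z)` in `Ω`, `z = 0` on `∂Ω`. -/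
def IsEquilibrium {N : ℕ} [NeZero N] (Ω : Set (Fin N → ℝ))
    (f : (Fin N → ℝ) → ℝ → (Fin N → ℝ) → ℝ) (z : (Fin N → ℝ) → ℝ) : Prop :=
  ContinuousOn z (closure Ω) ∧ (∀ x ∈ frontier Ω, z x = 0) ∧
    (∀ x ∈ closure Ω, 0 ≤ z x) ∧ (∀ x ∈ Ω, ContDiffAt ℝ 2 z x) ∧
    ∀ x ∈ Ω, lapl z x + f x (z x) (fun i => pd i z x) = 0

/-- Lemma 5.1 (separation of `E₊` from `E₀`): every equilibrium with `Λ(z) > 0` is at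
positive supremum distance from the set of equilibria with `Λ = 0`. -/
theorem equilibrium_positive_distance_from_E0 (N : ℕ) [NeZero N] (Ω : Set (Fin N → ℝ))
    (hΩbd : Bornology.IsBounded Ω) (hΩopen : IsOpen Ω) (hΩconn : IsConnected Ω)
    (hΩsym : reflHyp N 0 '' Ω = Ω)
    (hΩconv : ∀ x ∈ Ω, ∀ y ∈ Ω, (∀ i : Fin N, i ≠ 0 → x i = y i) → segment ℝ x y ⊆ Ω)
    -- condition (D2): each cap has only finitely many connected components
    (hΩD2 : ∀ lam : ℝ, 0 < lam →
      {D : Set (Fin N → ℝ) | ∃ x ∈ capSet Ω lam, D = connectedComponentIn (capSet Ω lam) x}.Finite)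
    -- condition (A)
    (hΩA : ∃ ς ∈ Ioo (0:ℝ) 1, ∃ R : ℝ, 0 < R ∧ ∀ x ∈ frontier Ω, ∀ ρ ∈ Ioo (0:ℝ) R,
      volume (Ω ∩ Metric.ball x ρ) ≤ ENNReal.ofReal ς * volume (Metric.ball x ρ))
    (β0 : ℝ) (hβ0 : 0 < β0)
    (f : (Fin N → ℝ) → ℝ → (Fin N → ℝ) → ℝ)
    (hfcont : Continuous fun q : (Fin N → ℝ) × ℝ × (Fin N → ℝ) => f q.1 q.2.1 q.2.2)
    (hflip : ∀ x u u' p p', |f x u p - f x u' p'| ≤ β0 * (|u - u'| + ‖p - p'‖))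
    (hfsym : ∀ x y u p, (∀ i : Fin N, i ≠ 0 → x i = y i) → f x u p = f y u p)
    (hfeven : ∀ x u (p : Fin N → ℝ), f x u (Function.update p 0 (-(p 0))) = f x u p)
    (z : (Fin N → ℝ) → ℝ) (hz : IsEquilibrium Ω f z) (hzpos : 0 < bigLambda Ω z) :
    ∃ ε : ℝ, 0 < ε ∧ ∀ w : (Fin N → ℝ) → ℝ, IsEquilibrium Ω f w → bigLambda Ω w = 0 →
      ∃ x ∈ closure Ω, ε ≤ |z x - w x| := by
  classical
  -- Basic facts about ℓ = ellOf Ω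
  obtain ⟨C, hC⟩ := isBounded_iff_forall_norm_le.mp hΩbd
  have hbddA : BddAbove ((fun x : Fin N → ℝ => x 0) '' Ω) := by
    refine ⟨C, ?_⟩
    rintro _ ⟨x, hx, rfl⟩
    calc x 0 ≤ |x 0| := le_abs_self _
      _ ≤ ‖x‖ := by simpa using norm_le_pi_norm x 0
      _ ≤ C := hC x hx
  have hle : ∀ x ∈ Ω, x 0 ≤ ellOf Ω := fun x hx => le_csSup hbddA ⟨x, hx, rfl⟩
  have hrefl0 : ∀ x ∈ Ω, reflHyp N 0 x ∈ Ω := by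
    intro x hx
    rw [← hΩsym]; exact Set.mem_image_of_mem _ hx
  obtain ⟨x₀, hx₀⟩ := hΩconn.nonempty
  obtain ⟨r, hr, hball⟩ := Metric.isOpen_iff.mp hΩopen x₀ hx₀
  have hy0 : Function.update x₀ 0 (x₀ 0 + r / 2) ∈ Ω := by
    apply hball
    rw [Metric.mem_ball]
    have h2 : dist (Function.update x₀ 0 (x₀ 0 + r / 2)) x₀ ≤ r / 2 := by
      refine (dist_pi_le_iff (by linarith)).mpr fun i => ?_
      by_cases hi : i = 0
      · subst hi
        simp only [Function.update_self, Real.dist_eq]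
        rw [show x₀ 0 + r / 2 - x₀ 0 = r / 2 by ring, abs_of_pos (by linarith)]
      · simp only [Function.update_of_ne hi, dist_self]
        linarith
    linarith
  have hℓpos : 0 < ellOf Ω := by
    have h1 : x₀ 0 + r / 2 ≤ ellOf Ω := by
      have := hle _ hy0
      simpa using this
    have h2 : -(x₀ 0) ≤ ellOf Ω := by
      have := hle _ (hrefl0 _ hx₀)
      simpa [reflHyp] using this
    linarith
  -- the defining set of bigLambda
  set S : ((Fin N → ℝ) → ℝ) → Set ℝ := fun w =>
    {lam | lam ∈ Ioc 0 (ellOf Ω) ∧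
      ∀ μ : ℝ, lam < μ → ∀ x ∈ capSet Ω μ, 0 ≤ w (reflHyp N μ x) - w x} with hSdef
  have hbig : ∀ w, bigLambda Ω w = sInf (S w) := fun w => rfl
  have hSbdd : ∀ w, BddBelow (S w) := fun w => ⟨0, fun lam hlam => hlam.1.1.le⟩
  have hSne : ∀ w, (S w).Nonempty := by
    intro w
    refine ⟨ellOf Ω, ⟨hℓpos, le_refl _⟩, ?_⟩
    intro μ hμ x hx
    exact absurd hx.2 (not_lt.mpr (((hle x hx.1).trans hμ.le)))
  -- a witness of failure of monotonicity for z
  set lam0 := min (bigLambda Ω z) (ellOf Ω) / 2 with hlam0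
  have hlam0pos : 0 < lam0 := by
    have := lt_min hzpos hℓpos
    simpa [hlam0] using half_pos this
  have hlam0le : lam0 ≤ ellOf Ω := by
    have : min (bigLambda Ω z) (ellOf Ω) ≤ ellOf Ω := min_le_right _ _
    simp only [hlam0]; linarith
  have hlam0lt : lam0 < bigLambda Ω z := by
    have h1 : min (bigLambda Ω z) (ellOf Ω) ≤ bigLambda Ω z := min_le_left _ _
    have h2 : 0 < min (bigLambda Ω z) (ellOf Ω) := lt_min hzpos hℓpos
    simp only [hlam0]; linarith
  have hlam0notmem : lam0 ∉ S z := by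
    intro hmem
    have := csInf_le (hSbdd z) hmem
    rw [← hbig z] at this
    exact absurd this (not_le.mpr hlam0lt)
  have hfail : ∃ μ : ℝ, lam0 < μ ∧ ∃ x ∈ capSet Ω μ, z (reflHyp N μ x) - z x < 0 := by
    by_contra hcon
    push_neg at hcon
    exact hlam0notmem ⟨⟨hlam0pos, hlam0le⟩, hcon⟩
  obtain ⟨μ, hμlam0, x, hxcap, hxlt⟩ := hfail
  have hμpos : 0 < μ := hlam0pos.trans hμlam0
  obtain ⟨hxΩ, hxμ⟩ := hxcap
  -- reflected point lies in Ω
  have hreflΩ : reflHyp N μ x ∈ Ω := by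
    have hyΩ : reflHyp N 0 x ∈ Ω := hrefl0 x hxΩ
    have hagree : ∀ i : Fin N, i ≠ 0 → x i = reflHyp N 0 x i := by
      intro i hi; simp [reflHyp, Function.update_of_ne hi]
    have hseg := hΩconv x hxΩ _ hyΩ hagree
    apply hseg
    have hx0pos : 0 < x 0 := hμpos.trans hxμ
    refine ⟨1 - (x 0 - μ) / x 0, (x 0 - μ) / x 0, ?_, ?_, by ring, ?_⟩
    · have : (x 0 - μ) / x 0 ≤ 1 := by
        rw [div_le_one hx0pos]; linarith
      linarith
    · exact div_nonneg (by linarith) (by linarith)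
    · funext i
      by_cases hi : i = 0
      · subst hi
        simp only [Pi.add_apply, Pi.smul_apply, smul_eq_mul, reflHyp,
          Function.update_self]
        field_simp
        ring
      · simp [reflHyp, Function.update_of_ne hi, Pi.add_apply, Pi.smul_apply,
          smul_eq_mul]
        ring
  -- choose ε
  set ε := (z x - z (reflHyp N μ x)) / 2 with hε
  have hεpos : 0 < ε := by
    simp only [hε]; linarith
  refine ⟨ε, hεpos, ?_⟩
  intro w hw hw0
  -- w is monotone: reflection inequality at μ
  have hwmono : 0 ≤ w (reflHyp N μ x) - w x := by
    have hlt : sInf (S w) < μ := by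
      rw [← hbig w, hw0]; exact hμpos
    obtain ⟨lam, hlamS, hlamlt⟩ := (csInf_lt_iff (hSbdd w) (hSne w)).mp hlt
    exact hlamS.2 μ hlamlt x ⟨hxΩ, hxμ⟩
  by_cases hcase : ε ≤ |z x - w x|
  · exact ⟨x, subset_closure hxΩ, hcase⟩
  · refine ⟨reflHyp N μ x, subset_closure hreflΩ, ?_⟩
    push_neg at hcase
    have h1 : z x - w x < ε := lt_of_le_of_lt (le_abs_self _) hcase
    have h2 : z (reflHyp N μ x) - w (reflHyp N μ x) ≤ -ε := by
      simp only [hε] at *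
      linarith
    calc ε ≤ -(z (reflHyp N μ x) - w (reflHyp N μ x)) := by linarith
      _ ≤ |z (reflHyp N μ x) - w (reflHyp N μ x)| := neg_le_abs _
end
end

section
/- (Lemma 6.2, chain transitivity of the ω-limit set.) Let (X, d) be a compact metric space carrying a flow S = (S_t)_{t∈ℝ} (S_0 = id, S_{t+s} = S_t ∘ S_s, each S_t continuous), and suppose X = ω(u) is the ω-limit set of a trajectory u : (0, ∞) → Y in an ambient metric space Y with dist(u(t), X) → 0, and suppose the flow on X is shadowed by u in the sense that the difference of a flow trajectory started at a point of X and the trajectory u started nearby grows by at most a fixed factor C_0 over time intervals of length ≤ 2T, up to an error that tends to 0 along u. Then X is chain transitive under S: for any φ, ψ ∈ X and any ε > 0, T > 0 there exist k ≥ 1, times t_1, …, t_k ≥ T and points φ_0 = φ, φ_1, …, φ_k = ψ in X with d(S_{t_{i+1}} φ_i, φ_{i+1}) < ε for 0 ≤ i < k. -/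
open Set Filter Metric

/-- Lemma 6.2 (abstract version): a compact ω-limit set shadowed by the trajectory is chain
transitive under the induced flow. -/
theorem omega_limit_chain_transitive {Y : Type*} [MetricSpace Y]
    (X : Set Y) (hXcomp : IsCompact X) (hXne : X.Nonempty)
    (S : ℝ → Y → Y)
    (hS0 : ∀ z ∈ X, S 0 z = z)
    (hSinv : ∀ t : ℝ, ∀ z ∈ X, S t z ∈ X)
    (hSgrp : ∀ s t : ℝ, ∀ z ∈ X, S (t + s) z = S t (S s z))
    (hScont : ∀ t : ℝ, ContinuousOn (S t) X)
    (u : ℝ → Y)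
    -- X attracts the trajectory u
    (hattr : Tendsto (fun t => infDist (u t) X) atTop (nhds 0))
    -- every point of X is a limit point of the trajectory
    (hlimit : ∀ z ∈ X, ∀ ε > (0:ℝ), ∀ T : ℝ, ∃ s ≥ T, dist (u s) z < ε)
    -- the flow on X is shadowed by u up to an error tending to 0
    (hshadow : ∀ T > (0:ℝ), ∃ C0 > (0:ℝ), ∃ η : ℝ → ℝ,
      Tendsto η atTop (nhds 0) ∧
      ∀ z ∈ X, ∀ s t : ℝ, 0 ≤ t → t ≤ 2 * T →
        dist (S t z) (u (s + t)) ≤ C0 * (dist z (u s) + η s)) :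
    -- chain transitivity of X under S
    ∀ φ ∈ X, ∀ ψ ∈ X, ∀ ε > (0:ℝ), ∀ T > (0:ℝ),
      ∃ k : ℕ, 1 ≤ k ∧ ∃ ts : Fin k → ℝ, ∃ pts : Fin (k + 1) → Y,
        (∀ i, T ≤ ts i) ∧ (∀ i, pts i ∈ X) ∧
        pts 0 = φ ∧ pts (Fin.last k) = ψ ∧
        ∀ i : Fin k, dist (S (ts i) (pts i.castSucc)) (pts i.succ) < ε := by
  intro φ hφ ψ hψ ε hε T hT
  obtain ⟨C0, hC0, η, hη, hshad⟩ := hshadow T hT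
  set δ : ℝ := ε / (2 * C0 + 2) with hδdef
  have hδ : 0 < δ := by positivity
  have h1 : ∀ᶠ s in atTop, η s < δ := hη.eventually_lt_const hδ
  have h2 : ∀ᶠ s in atTop, infDist (u s) X < δ := hattr.eventually_lt_const hδ
  obtain ⟨s₀, hs₀⟩ := eventually_atTop.mp (h1.and h2)
  obtain ⟨s, hs_ge, hs⟩ := hlimit φ hφ δ hδ s₀
  obtain ⟨s', hs'_ge, hs'⟩ := hlimit ψ hψ δ hδ (s + T)
  set r : ℝ := s' - s with hrdef
  have hrT : T ≤ r := by simp only [hrdef]; linarith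
  have hrpos : 0 < r := lt_of_lt_of_le hT hrT
  set k : ℕ := ⌊r / T⌋₊ with hkdef
  have hk1 : 1 ≤ k := Nat.le_floor (by
    rw [Nat.cast_one, le_div_iff₀ hT]; linarith)
  have hkpos : (0:ℝ) < (k : ℝ) := by exact_mod_cast hk1
  have hkr : (k : ℝ) * T ≤ r := by
    have := Nat.floor_le (le_of_lt (div_pos hrpos hT))
    calc (k : ℝ) * T ≤ (r / T) * T := by
          apply mul_le_mul_of_nonneg_right _ (le_of_lt hT)
          exact this
      _ = r := div_mul_cancel₀ r (ne_of_gt hT)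
  have hrk : r < ((k : ℝ) + 1) * T := by
    have := Nat.lt_floor_add_one (r / T)
    calc r = (r / T) * T := (div_mul_cancel₀ r (ne_of_gt hT)).symm
      _ < ((k : ℝ) + 1) * T := by
          apply mul_lt_mul_of_pos_right _ hT
          exact_mod_cast this
  set τ : ℝ := r / k with hτdef
  have hτT : T ≤ τ := by
    rw [hτdef, le_div_iff₀ hkpos]; linarith [hkr]
  have hτ2T : τ ≤ 2 * T := by
    rw [hτdef, div_le_iff₀ hkpos]
    have hk1' : (1:ℝ) ≤ (k:ℝ) := by exact_mod_cast hk1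
    nlinarith [hrk, hT, mul_nonneg (sub_nonneg.mpr hk1') hT.le]
  have hτ0 : 0 ≤ τ := le_trans (le_of_lt hT) hτT
  have hkτ : (k : ℝ) * τ = r := mul_div_cancel₀ r (ne_of_gt hkpos)
  -- nearest-point projection onto X
  have hp : ∀ t : ℝ, ∃ y ∈ X, infDist (u t) X = dist (u t) y :=
    fun t => hXcomp.exists_infDist_eq_dist hXne (u t)
  choose p hpX hpd using hp
  -- the chain points
  set pts : Fin (k + 1) → Y := fun j =>
    if (j : ℕ) = 0 then φ else if (j : ℕ) = k then ψ else p (s + (j : ℕ) * τ) with hptsdef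
  have hptsmem : ∀ j : Fin (k + 1), pts j ∈ X := by
    intro j
    simp only [hptsdef]
    split_ifs <;> first | exact hφ | exact hψ | exact hpX _
  have hptsclose : ∀ j : Fin (k + 1), dist (pts j) (u (s + (j : ℕ) * τ)) < δ := by
    intro j
    simp only [hptsdef]
    split_ifs with h0 hk'
    · rw [h0]; simp only [Nat.cast_zero, zero_mul, add_zero]
      rw [dist_comm]; exact hs
    · rw [hk']
      have : s + (k : ℝ) * τ = s' := by rw [hkτ]; simp [hrdef]
      rw [this, dist_comm]; exact hs'
    · rw [dist_comm, ← hpd]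
      have hge : s₀ ≤ s + (j : ℕ) * τ := by
        have : (0:ℝ) ≤ (j : ℕ) * τ := mul_nonneg (Nat.cast_nonneg _) hτ0
        linarith
      exact (hs₀ _ hge).2
  refine ⟨k, hk1, fun _ => τ, pts, fun _ => hτT, hptsmem, ?_, ?_, ?_⟩
  · simp only [hptsdef]
    norm_num
  · simp only [hptsdef, Fin.val_last]
    rw [if_neg (by omega)]
    simp
  · intro i
    have hsi : s₀ ≤ s + (i : ℕ) * τ := by
      have : (0:ℝ) ≤ (i : ℕ) * τ := mul_nonneg (Nat.cast_nonneg _) hτ0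
      linarith
    have hη' : η (s + (i : ℕ) * τ) < δ := (hs₀ _ hsi).1
    have hd1 : dist (pts i.castSucc) (u (s + (i : ℕ) * τ)) < δ := by
      have := hptsclose i.castSucc
      simpa using this
    have hshad' := hshad (pts i.castSucc) (hptsmem i.castSucc)
      (s + (i : ℕ) * τ) τ hτ0 hτ2T
    have hd2 : dist (pts i.succ) (u (s + (i : ℕ) * τ + τ)) < δ := by
      have := hptsclose i.succ
      have heq : s + ((i.succ : ℕ) : ℝ) * τ = s + (i : ℕ) * τ + τ := by
        simp only [Fin.val_succ, Nat.cast_add, Nat.cast_one]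
        ring
      rwa [heq] at this
    calc dist (S τ (pts i.castSucc)) (pts i.succ)
        ≤ dist (S τ (pts i.castSucc)) (u (s + (i : ℕ) * τ + τ))
            + dist (u (s + (i : ℕ) * τ + τ)) (pts i.succ) := dist_triangle _ _ _
      _ ≤ C0 * (dist (pts i.castSucc) (u (s + (i : ℕ) * τ)) + η (s + (i : ℕ) * τ))
            + dist (u (s + (i : ℕ) * τ + τ)) (pts i.succ) := by
          exact add_le_add_left hshad' _
      _ < C0 * (δ + δ) + δ := by
          rw [dist_comm (u _)]
          have : C0 * (dist (pts i.castSucc) (u (s + (i : ℕ) * τ)) + η (s + (i : ℕ) * τ))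
              ≤ C0 * (δ + δ) := by
            apply mul_le_mul_of_nonneg_left _ (le_of_lt hC0)
            linarith [hd1, hη']
          linarith [hd2]
      _ = (2 * C0 + 2) * δ - δ := by ring
      _ ≤ ε - δ := by
          rw [hδdef, mul_div_cancel₀ _ (by positivity : (2*C0+2 : ℝ) ≠ 0)]
      _ < ε := by linarith
end
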